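/- arXiv:1503.05492 — 6 statements merged into one kernel-verified Lean document; each statement's English description precedes it below -/
import Mathlib

section
/- Let R be a commutative Noetherian ring, C a semidualizing R-module, and M an R-module. Then M ≠ 0 if and only if Hom_R(C, M) ≠ 0; moreover, M ≠ 0 if and only if C ⊗_R M ≠ 0. -/
open CategoryTheory

universe u

/-- `C` is a semidualizing `R`-module: finitely generated, the homothety map
`R → Hom_R(C,C)` is bijective, and `Ext^i_R(C,C) = 0` for all `i > 0`. -/
def IsSemidualizing (R : Type u) [CommRing R] (C : Type u) [AddCommGroup C] [Module R C] :
    Prop :=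
  Module.Finite R C ∧
  Function.Bijective (LinearMap.lsmul R C) ∧
  ∀ i : ℕ, 0 < i →
    Subsingleton
      (((Ext R (ModuleCat.{u} R) i).obj (Opposite.op (ModuleCat.of R C))).obj (ModuleCat.of R C))
open scoped TensorProduct

set_option maxHeartbeats 1000000
set_option synthInstance.maxHeartbeats 400000

section Aux

variable {R : Type u} [CommRing R]

open TensorProduct in
/-- If `C` is a finitely generated faithful module (in the sense that the homothety map
`R → End C` is injective) and `p` is a prime, then there is a nonzero map `C →ₗ[R] R ⧸ p`. -/
lemma exists_hom_quot_ne_zero (C : Type u) [AddCommGroup C] [Module R C]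
    [Module.Finite R C] (hinj : Function.Injective ⇑(LinearMap.lsmul R C))
    (p : Ideal R) [p.IsPrime] :
    ∃ (g : C →ₗ[R] R ⧸ p) (c : C), g c ≠ 0 := by
  classical
  set D := R ⧸ p with hD
  let k := FractionRing D
  set N := D ⊗[R] C with hN
  -- Step A : the generic fiber is nontrivial
  have hNT : Nontrivial (k ⊗[D] N) := by
    by_contra hsub
    rw [not_nontrivial_iff_subsingleton] at hsub
    haveI : IsLocalizedModule (nonZeroDivisors D) (TensorProduct.mk D k N 1) :=
      (isLocalizedModule_iff_isBaseChange (nonZeroDivisors D) k _).mpr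
        (TensorProduct.isBaseChange D N k)
    haveI : Subsingleton (LocalizedModule (nonZeroDivisors D) N) :=
      (IsLocalizedModule.iso (nonZeroDivisors D)
        (TensorProduct.mk D k N 1)).toEquiv.subsingleton
    have hs := LocalizedModule.subsingleton_iff.mp ‹_›
    obtain ⟨t, ht⟩ := Module.Finite.fg_top (R := R) (M := C)
    choose σ hσmem hσ0 using fun c : C => hs ((1 : D) ⊗ₜ[R] c)
    set s : D := ∏ c ∈ t, σ c with hs_def
    have hsmem : s ∈ nonZeroDivisors D := Submonoid.prod_mem _ fun c _ => hσmem c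
    have hL : ∀ c : C, s • ((1 : D) ⊗ₜ[R] c : N) = 0 := by
      intro c
      have hc : c ∈ Submodule.span R (t : Set C) := ht ▸ Submodule.mem_top
      refine Submodule.span_induction ?_ ?_ ?_ ?_ hc
      · intro c hc
        rw [hs_def, ← Finset.prod_erase_mul t σ hc, mul_smul, hσ0, smul_zero]
      · rw [tmul_zero, smul_zero]
      · intro y z _ _ hy hz
        rw [tmul_add, smul_add, hy, hz, add_zero]
      · intro r y _ hy
        rw [tmul_smul, smul_comm, hy, smul_zero]
    obtain ⟨r, hr⟩ := Ideal.Quotient.mk_surjective (I := p) s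
    have hrp : r ∉ p := fun hmem => nonZeroDivisors.ne_zero hsmem
      (by rw [← hr]; exact Ideal.Quotient.eq_zero_iff_mem.mpr hmem)
    have hrc : ∀ c : C, r • c ∈ (p • ⊤ : Submodule R C) := by
      intro c
      have h1 : (Ideal.Quotient.mk p r ⊗ₜ[R] c : N) = 0 := by
        rw [hr, show (s ⊗ₜ[R] c : N) = s • ((1 : D) ⊗ₜ[R] c) by
          rw [TensorProduct.smul_tmul', smul_eq_mul, mul_one], hL]
      have h2 := congrArg (TensorProduct.quotTensorEquivQuotSMul C p) h1
      rw [TensorProduct.quotTensorEquivQuotSMul_mk_tmul, map_zero] at h2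
      exact (Submodule.Quotient.mk_eq_zero _).mp h2
    have hrange : LinearMap.range ((LinearMap.lsmul R C) r) ≤ p • ⊤ := by
      rintro x ⟨c, rfl⟩
      simpa using hrc c
    obtain ⟨P, hmonic, -, hcoeff, heval⟩ :=
      LinearMap.exists_monic_and_coeff_mem_pow_and_aeval_eq_zero_of_range_le_smul R
        ((LinearMap.lsmul R C) r) p hrange
    have hsmul : (LinearMap.lsmul R C) r = algebraMap R (Module.End R C) r := by
      ext c; simp [Module.algebraMap_end_apply]
    rw [hsmul, Polynomial.aeval_algebraMap_apply_eq_algebraMap_eval] at heval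
    have hPr : P.eval r = 0 := by
      apply hinj
      have : (LinearMap.lsmul R C) (P.eval r) = 0 := by
        ext c
        have := congrArg (fun f : Module.End R C => f c) heval
        simpa [Module.algebraMap_end_apply] using this
      simp [this]
    have hpow : r ^ P.natDegree ∈ p := by
      have h1 : ∑ i ∈ Finset.range (P.natDegree + 1), P.coeff i * r ^ i = 0 := by
        rw [← Polynomial.eval_eq_sum_range]; exact hPr
      rw [Finset.sum_range_succ, hmonic.coeff_natDegree, one_mul] at h1
      rw [eq_neg_of_add_eq_zero_right h1]
      exact p.neg_mem (Ideal.sum_mem _ fun i hi =>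
        Ideal.mul_mem_right _ _ (Ideal.pow_le_self
          (Nat.sub_ne_zero_of_lt (Finset.mem_range.mp hi)) (hcoeff i)))
    exact hrp (‹p.IsPrime›.mem_of_pow_mem _ hpow)
  -- Step B : build a nonzero functional with values in `D`
  obtain ⟨x, hx⟩ := exists_ne (0 : k ⊗[D] N)
  obtain ⟨φ, hφ⟩ : ∃ φ : Module.Dual k (k ⊗[D] N), φ x ≠ 0 := by
    by_contra hcon
    push_neg at hcon
    exact hx ((Module.forall_dual_apply_eq_zero_iff k x).mp hcon)
  set ψ : (k ⊗[D] N) →ₗ[D] k := φ.restrictScalars D with hψ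
  set h0 : N →ₗ[D] k := ψ ∘ₗ (TensorProduct.mk D k N 1) with hh0def
  have hh0 : ∃ n : N, h0 n ≠ 0 := by
    by_contra hcon
    push_neg at hcon
    apply hφ
    have hsp : x ∈ Submodule.span D {z : k ⊗[D] N | ∃ a n, a ⊗ₜ n = z} := by
      rw [TensorProduct.span_tmul_eq_top]; trivial
    have : ∀ z ∈ Submodule.span D {z : k ⊗[D] N | ∃ a n, a ⊗ₜ n = z}, ψ z = 0 := by
      intro z hz
      refine Submodule.span_induction ?_ ?_ ?_ ?_ hz
      · rintro _ ⟨a, n, rfl⟩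
        have : (a ⊗ₜ[D] n : k ⊗[D] N) = a • ((1 : k) ⊗ₜ[D] n) := by
          rw [TensorProduct.smul_tmul', smul_eq_mul, mul_one]
        have h1 : ψ (a ⊗ₜ[D] n) = a • φ ((1 : k) ⊗ₜ[D] n) := by
          rw [this]; exact φ.map_smul a _
        rw [h1]
        have : φ ((1 : k) ⊗ₜ[D] n) = h0 n := rfl
        rw [this, hcon, smul_zero]
      · exact map_zero ψ
      · intro y z _ _ hy hz; rw [map_add, hy, hz, add_zero]
      · intro d y _ hy; rw [map_smul, hy, smul_zero]
    exact this x hsp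
  obtain ⟨u, hu⟩ := Module.Finite.fg_top (R := D) (M := N)
  obtain ⟨b, hb⟩ := IsLocalization.exist_integer_multiples (nonZeroDivisors D) u h0
  set g1 : N →ₗ[D] k := (b : D) • h0 with hg1def
  have hrange : ∀ n : N, g1 n ∈ LinearMap.range (Algebra.linearMap D k) := by
    have hspan : Submodule.span D (u : Set N) ≤
        Submodule.comap g1 (LinearMap.range (Algebra.linearMap D k)) := by
      rw [Submodule.span_le]
      intro n hn
      obtain ⟨d, hd⟩ := hb n hn
      exact ⟨d, by rw [hg1def]; simpa [Algebra.linearMap_apply] using hd⟩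
    intro n
    exact hspan (hu ▸ Submodule.mem_top)
  have hinjk : Function.Injective ⇑(Algebra.linearMap D k) := IsFractionRing.injective D k
  set eqv := LinearEquiv.ofInjective (Algebra.linearMap D k) hinjk with heqv
  set g2 : N →ₗ[D] D := eqv.symm.toLinearMap ∘ₗ
    (g1.codRestrict (LinearMap.range (Algebra.linearMap D k)) hrange) with hg2def
  obtain ⟨n₀, hn₀⟩ := hh0
  have hg1n : g1 n₀ ≠ 0 := by
    have hb0 : algebraMap D k (b : D) ≠ 0 := fun H =>
      nonZeroDivisors.ne_zero b.2 (IsFractionRing.injective D k (by rw [H, map_zero]))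
    have : g1 n₀ = algebraMap D k (b : D) * h0 n₀ := by
      rw [hg1def, LinearMap.smul_apply, Algebra.smul_def]
    rw [this]
    exact mul_ne_zero hb0 hn₀
  have hg2n : g2 n₀ ≠ 0 := by
    intro H
    have h1 : (g1.codRestrict (LinearMap.range (Algebra.linearMap D k)) hrange) n₀ = 0 :=
      (LinearEquiv.map_eq_zero_iff eqv.symm).mp H
    exact hg1n (congrArg Subtype.val h1)
  have hfinal : ∃ c : C, g2 ((1 : D) ⊗ₜ[R] c) ≠ 0 := by
    by_contra hcon
    push_neg at hcon
    apply hg2n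
    have hsp : n₀ ∈ Submodule.span R {z : N | ∃ d c, d ⊗ₜ c = z} := by
      rw [TensorProduct.span_tmul_eq_top]; trivial
    refine Submodule.span_induction ?_ ?_ ?_ ?_ hsp
    · rintro _ ⟨d, c, rfl⟩
      have : (d ⊗ₜ[R] c : N) = d • ((1 : D) ⊗ₜ[R] c) := by
        rw [TensorProduct.smul_tmul', smul_eq_mul, mul_one]
      rw [this, map_smul, hcon, smul_zero]
    · exact map_zero g2
    · intro y z _ _ hy hz; rw [map_add, hy, hz, add_zero]
    · intro r y _ hy
      have : g2 (r • y) = r • g2 y := g2.map_smul_of_tower r y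
      rw [this, hy, smul_zero]
  obtain ⟨c, hc⟩ := hfinal
  exact ⟨(g2.restrictScalars R) ∘ₗ (TensorProduct.mk R D C 1), c, hc⟩

end Aux

/-- For a semidualizing module `C` and any module `M`: `M ≠ 0` iff `Hom_R(C, M) ≠ 0`,
and `M ≠ 0` iff `C ⊗_R M ≠ 0`. -/
theorem nontrivial_hom_and_tensor_iff (R : Type u) [CommRing R] [IsNoetherianRing R]
    (C : Type u) [AddCommGroup C] [Module R C] (hC : IsSemidualizing R C)
    (M : Type u) [AddCommGroup M] [Module R M] :
    (Nontrivial M ↔ Nontrivial (C →ₗ[R] M)) ∧ (Nontrivial M ↔ Nontrivial (C ⊗[R] M)) := by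
  obtain ⟨hfin, hbij, -⟩ := hC
  haveI := hfin
  have key : ∀ (N : Type u) [AddCommGroup N] [Module R N], Nontrivial N →
      ∃ (f : C →ₗ[R] N) (c : C), f c ≠ 0 := by
    intro N _ _ hN
    haveI := hN
    rcases subsingleton_or_nontrivial R with hR | hR
    · haveI := Module.subsingleton R N
      exact absurd hN (not_nontrivial_iff_subsingleton.mpr inferInstance)
    · obtain ⟨p, hp⟩ := associatedPrimes.nonempty R N
      obtain ⟨hprime, x, hx⟩ := isAssociatedPrime_iff.mp hp
      haveI := hprime
      obtain ⟨g, c, hgc⟩ := exists_hom_quot_ne_zero C hbij.injective p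
      have hle : p ≤ LinearMap.ker (LinearMap.toSpanSingleton R N x) := by
        intro r hr
        rw [LinearMap.mem_ker, LinearMap.toSpanSingleton_apply]
        exact (Submodule.mem_bot R).mp (Submodule.mem_colon_singleton.mp (hx ▸ hr))
      have hle' : LinearMap.ker (LinearMap.toSpanSingleton R N x) ≤ p := by
        intro r hr
        rw [LinearMap.mem_ker, LinearMap.toSpanSingleton_apply] at hr
        exact hx ▸ Submodule.mem_colon_singleton.mpr ((Submodule.mem_bot R).mpr hr)
      set ι := Submodule.liftQ p (LinearMap.toSpanSingleton R N x) hle with hι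
      have hιinj : Function.Injective ι := by
        rw [← LinearMap.ker_eq_bot]
        exact Submodule.ker_liftQ_eq_bot p _ hle hle'
      refine ⟨ι ∘ₗ g, c, fun H => hgc (hιinj ?_)⟩
      rw [map_zero]
      exact H
  constructor
  · constructor
    · intro hM
      obtain ⟨f, c, hfc⟩ := key M hM
      exact ⟨f, 0, fun H => hfc (by rw [H]; rfl)⟩
    · intro h
      by_contra hM
      rw [not_nontrivial_iff_subsingleton] at hM
      obtain ⟨f, g, hfg⟩ := h
      exact hfg (LinearMap.ext fun c => Subsingleton.elim _ _)
  · constructor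
    · intro hM
      obtain ⟨m, hm⟩ := exists_ne (0 : M)
      obtain ⟨χ, hχ⟩ := CharacterModule.exists_character_apply_ne_zero_of_ne_zero hm
      haveI : Nontrivial (CharacterModule M) :=
        nontrivial_of_ne χ 0 (fun H => hχ (by rw [H]; rfl))
      obtain ⟨f, c, hfc⟩ := key (CharacterModule M) inferInstance
      have hf : f ≠ 0 := fun H => hfc (by rw [H]; rfl)
      have hef : (CharacterModule.homEquiv (R := R) (A := C) (B := M)) f ≠ 0 := fun H =>
        hf ((LinearEquiv.map_eq_zero_iff _).mp H)
      by_contra hT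
      rw [not_nontrivial_iff_subsingleton] at hT
      apply hef
      ext z
      rw [Subsingleton.elim z (0 : C ⊗[R] M), map_zero]
      rfl
    · intro h
      by_contra hM
      rw [not_nontrivial_iff_subsingleton] at hM
      have hz : ∀ z : C ⊗[R] M, z = 0 := fun z => by
        induction z using TensorProduct.induction_on with
        | zero => rfl
        | tmul c m => rw [Subsingleton.elim m (0 : M), TensorProduct.tmul_zero]
        | add y z hy hz => rw [hy, hz, add_zero]
      obtain ⟨a, b, hab⟩ := h
      exact hab ((hz a).trans (hz b).symm)
end

section
/- Let R be a commutative Noetherian ring, C a semidualizing R-module, M a C-flat R-module, and E an injective R-module. Then Hom_R(M, E) is a C-injective R-module. -/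
open CategoryTheory

universe u

open scoped TensorProduct

/-- An `R`-module is `C`-flat if it is isomorphic to `C ⊗_R F` for some flat `R`-module `F`. -/
def IsCFlat (R : Type u) [CommRing R] (C : Type u) [AddCommGroup C] [Module R C]
    (M : Type u) [AddCommGroup M] [Module R M] : Prop :=
  ∃ (F : Type u) (_ : AddCommGroup F) (_ : Module R F),
    Module.Flat R F ∧ Nonempty ((C ⊗[R] F) ≃ₗ[R] M)

/-- An `R`-module is `C`-injective if it is isomorphic to `Hom_R(C, I)` for some injective
`R`-module `I`. -/
def IsCInjective (R : Type u) [CommRing R] (C : Type u) [AddCommGroup C] [Module R C]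
    (M : Type u) [AddCommGroup M] [Module R M] : Prop :=
  ∃ (I : Type u) (_ : AddCommGroup I) (_ : Module R I),
    Module.Injective R I ∧ Nonempty ((C →ₗ[R] I) ≃ₗ[R] M)

/-- If `F` is flat and `E` is injective, then `F →ₗ[R] E` is injective. -/
lemma injective_linearMap_of_flat (R F E : Type u) [CommRing R]
    [AddCommGroup F] [Module R F] [Module.Flat R F]
    [AddCommGroup E] [Module R E] (hE : Module.Injective R E) :
    Module.Injective R (F →ₗ[R] E) := by
  constructor
  intro X Y _ _ _ _ f hf g
  have hf' : Function.Injective (f.rTensor F) :=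
    Module.Flat.rTensor_preserves_injective_linearMap f hf
  obtain ⟨h, hh⟩ := hE.out (f.rTensor F) hf' (TensorProduct.uncurry (RingHom.id R) X F E g)
  refine ⟨TensorProduct.curry h, fun x => ?_⟩
  ext y
  simpa using hh (x ⊗ₜ[R] y)

/-- If `M` is `C`-flat and `E` is injective, then `Hom_R(M, E)` is `C`-injective. -/
theorem isCInjective_hom_of_isCFlat (R : Type u) [CommRing R] [IsNoetherianRing R]
    (C : Type u) [AddCommGroup C] [Module R C] (hC : IsSemidualizing R C)
    (M : Type u) [AddCommGroup M] [Module R M] (hM : IsCFlat R C M)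
    (E : Type u) [AddCommGroup E] [Module R E] (hE : Module.Injective R E) :
    IsCInjective R C (M →ₗ[R] E) := by
  obtain ⟨F, _, _, hF, ⟨e⟩⟩ := hM
  exact ⟨F →ₗ[R] E, inferInstance, inferInstance,
    injective_linearMap_of_flat R F E hE,
    ⟨(TensorProduct.lift.equiv (RingHom.id R) C F E).trans (e.arrowCongr (LinearEquiv.refl R E))⟩⟩
end

section
/- Let R be a commutative Noetherian ring, C a semidualizing R-module, M a C-injective R-module, and E an injective R-module. Then Hom_R(M, E) is a C-flat R-module. -/
open CategoryTheory

universe u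

open scoped TensorProduct

section AuxSemidualizing

open TensorProduct LinearMap Function

variable {R : Type u} [CommRing R]

noncomputable def thetaMap (M I E : Type u) [AddCommGroup M] [Module R M]
    [AddCommGroup I] [Module R I] [AddCommGroup E] [Module R E] :
    (M ⊗[R] (I →ₗ[R] E)) →ₗ[R] ((M →ₗ[R] I) →ₗ[R] E) :=
  TensorProduct.lift ((LinearMap.llcomp R (M →ₗ[R] I) I E).flip ∘ₗ LinearMap.applyₗ)

@[simp] lemma thetaMap_tmul (M I E : Type u) [AddCommGroup M] [Module R M]
    [AddCommGroup I] [Module R I] [AddCommGroup E] [Module R E]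
    (m : M) (g : I →ₗ[R] E) (f : M →ₗ[R] I) :
    thetaMap M I E (m ⊗ₜ g) f = g (f m) := rfl

lemma thetaMap_naturality {M N I E : Type u} [AddCommGroup M] [Module R M]
    [AddCommGroup N] [Module R N]
    [AddCommGroup I] [Module R I] [AddCommGroup E] [Module R E]
    (u : M →ₗ[R] N) (x : M ⊗[R] (I →ₗ[R] E)) (f : N →ₗ[R] I) :
    thetaMap N I E (LinearMap.rTensor _ u x) f = thetaMap M I E x (f ∘ₗ u) := by
  induction x using TensorProduct.induction_on with
  | zero => simp
  | tmul m g => simp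
  | add a b ha hb => simp [ha, hb]

/-- `a ↦ (v ↦ v i • a)` as a linear map `I →ₗ (Fin n → R) →ₗ I`. -/
noncomputable def singMap (n : ℕ) (I : Type u) [AddCommGroup I] [Module R I] (i : Fin n) :
    I →ₗ[R] ((Fin n → R) →ₗ[R] I) where
  toFun a := (LinearMap.proj i).smulRight a
  map_add' a b := LinearMap.ext fun v => by
    show v i • (a + b) = v i • a + v i • b
    rw [smul_add]
  map_smul' r a := LinearMap.ext fun v => by
    show v i • (r • a) = r • (v i • a)
    rw [smul_comm]

@[simp] lemma singMap_apply (n : ℕ) (I : Type u) [AddCommGroup I] [Module R I] (i : Fin n)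
    (a : I) (v : Fin n → R) : singMap n I i a v = v i • a := rfl

lemma sum_single_smul (n : ℕ) (v : Fin n → R) :
    (∑ i, v i • (Pi.single i (1 : R) : Fin n → R)) = v := by
  ext j
  simp [Pi.single_apply, Finset.sum_ite_eq]

lemma thetaMap_bijective_free (n : ℕ) (I E : Type u)
    [AddCommGroup I] [Module R I] [AddCommGroup E] [Module R E] :
    Function.Bijective (thetaMap (R := R) (Fin n → R) I E) := by
  have key : ∀ (f : (Fin n → R) →ₗ[R] I),
      (∑ i, singMap n I i (f (Pi.single i 1))) = f := by
    intro f
    refine LinearMap.ext fun v => ?_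
    calc (∑ i, singMap n I i (f (Pi.single i 1))) v
        = ∑ i, v i • f (Pi.single i 1) := by
          rw [LinearMap.sum_apply]; simp
      _ = f v := by
          conv_rhs => rw [← sum_single_smul n v]
          rw [map_sum]
          simp only [map_smul]
  let Φ : (((Fin n → R) →ₗ[R] I) →ₗ[R] E) → ((Fin n → R) ⊗[R] (I →ₗ[R] E)) :=
    fun φ => ∑ i, (Pi.single i 1 : Fin n → R) ⊗ₜ (φ ∘ₗ singMap n I i)
  refine Function.bijective_iff_has_inverse.mpr ⟨Φ, ?_, ?_⟩
  · -- left inverse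
    intro x
    induction x using TensorProduct.induction_on with
    | zero => simp [Φ, tmul_zero]
    | tmul m g =>
        have h1 : ∀ i : Fin n, (thetaMap (Fin n → R) I E (m ⊗ₜ g)) ∘ₗ singMap n I i
            = m i • g := by
          intro i
          refine LinearMap.ext fun a => ?_
          show thetaMap (Fin n → R) I E (m ⊗ₜ g) (singMap n I i a) = m i • g a
          rw [thetaMap_tmul, singMap_apply, map_smul]
        calc Φ (thetaMap (Fin n → R) I E (m ⊗ₜ g))
            = ∑ i, (Pi.single i 1 : Fin n → R) ⊗ₜ[R] (m i • g) := by simp only [Φ, h1]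
          _ = ∑ i, (m i • (Pi.single i 1 : Fin n → R)) ⊗ₜ[R] g := by
              simp only [tmul_smul, smul_tmul]
          _ = (∑ i, m i • (Pi.single i 1 : Fin n → R)) ⊗ₜ[R] g := by rw [sum_tmul]
          _ = m ⊗ₜ[R] g := by rw [sum_single_smul]
    | add a b ha hb =>
        have : Φ (thetaMap (Fin n → R) I E (a + b))
            = Φ (thetaMap (Fin n → R) I E a) + Φ (thetaMap (Fin n → R) I E b) := by
          simp only [map_add, Φ, LinearMap.add_comp, tmul_add, Finset.sum_add_distrib]
        rw [this, ha, hb]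
  · -- right inverse
    intro φ
    refine LinearMap.ext fun f => ?_
    have : thetaMap (Fin n → R) I E (Φ φ) f
        = φ (∑ i, singMap n I i (f (Pi.single i 1))) := by
      simp [Φ, map_sum]
    rw [this, key]

lemma thetaMap_bijective [IsNoetherianRing R] (M I E : Type u)
    [AddCommGroup M] [Module R M] [Module.Finite R M]
    [AddCommGroup I] [Module R I] [AddCommGroup E] [Module R E]
    (hE : Module.Injective R E) :
    Function.Bijective (thetaMap (R := R) M I E) := by
  obtain ⟨n, p, hp⟩ := Module.Finite.exists_fin' R M
  haveI : Module.Finite R (LinearMap.ker p) :=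
    Module.Finite.iff_fg.mpr (IsNoetherian.noetherian _)
  obtain ⟨m, q, hq⟩ := Module.Finite.exists_fin' R (LinearMap.ker p)
  set l : (Fin m → R) →ₗ[R] (Fin n → R) := (LinearMap.ker p).subtype ∘ₗ q with hl
  have hrange : LinearMap.range l = LinearMap.ker p := by
    rw [hl, LinearMap.range_comp, LinearMap.range_eq_top.mpr hq, Submodule.map_top,
      Submodule.range_subtype]
  constructor
  · -- injectivity
    rw [injective_iff_map_eq_zero]
    intro x hx
    obtain ⟨y, rfl⟩ := LinearMap.rTensor_surjective (I →ₗ[R] E) hp x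
    set ψ : ((Fin n → R) →ₗ[R] I) →ₗ[R] E := thetaMap (Fin n → R) I E y with hψ
    set Lstar : ((Fin n → R) →ₗ[R] I) →ₗ[R] ((Fin m → R) →ₗ[R] I) :=
      LinearMap.lcomp R I l with hLstar
    have hker : LinearMap.ker Lstar ≤ LinearMap.ker ψ := by
      intro g hg
      have hgl : g ∘ₗ l = 0 := hg
      have hle : LinearMap.ker p ≤ LinearMap.ker g := by
        rw [← hrange]
        exact LinearMap.range_le_ker_iff.mpr hgl
      set e := p.quotKerEquivOfSurjective hp with he
      set g' : M →ₗ[R] I := ((LinearMap.ker p).liftQ g hle) ∘ₗ e.symm.toLinearMap with hg'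
      have hgp : g' ∘ₗ p = g := by
        refine LinearMap.ext fun v => ?_
        have h1 : e.symm (p v) = Submodule.Quotient.mk v := by
          apply e.injective
          rw [LinearEquiv.apply_symm_apply]
          rfl
        show ((LinearMap.ker p).liftQ g hle) (e.symm (p v)) = g v
        rw [h1, Submodule.liftQ_apply]
      show ψ g = 0
      rw [← hgp, hψ, ← thetaMap_naturality p y g', hx, LinearMap.zero_apply]
    set ψbar : (((Fin n → R) →ₗ[R] I) ⧸ LinearMap.ker Lstar) →ₗ[R] E :=
      (LinearMap.ker Lstar).liftQ ψ hker with hψbar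
    set j : (((Fin n → R) →ₗ[R] I) ⧸ LinearMap.ker Lstar) →ₗ[R] ((Fin m → R) →ₗ[R] I) :=
      (LinearMap.range Lstar).subtype ∘ₗ Lstar.quotKerEquivRange.toLinearMap with hj
    have hjinj : Function.Injective j :=
      (Submodule.injective_subtype _).comp Lstar.quotKerEquivRange.injective
    obtain ⟨ψ', hψ'⟩ := hE.out j hjinj ψbar
    have hkey : ∀ g : (Fin n → R) →ₗ[R] I, ψ' (Lstar g) = ψ g := by
      intro g
      have h1 : j (Submodule.Quotient.mk g) = Lstar g := Lstar.quotKerEquivRange_apply_mk g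
      rw [← h1, hψ']
      exact Submodule.liftQ_apply _ ψ g
    obtain ⟨z, hz⟩ := (thetaMap_bijective_free m I E).2 ψ'
    have hyz : LinearMap.rTensor (I →ₗ[R] E) l z = y := by
      apply (thetaMap_bijective_free n I E).1
      refine LinearMap.ext fun g => ?_
      rw [thetaMap_naturality l z g, hz]
      exact hkey g
    have hpl : p ∘ₗ l = 0 := LinearMap.range_le_ker_iff.mp (le_of_eq hrange)
    rw [← hyz, ← LinearMap.rTensor_comp_apply, hpl, LinearMap.rTensor_zero,
      LinearMap.zero_apply]
  · -- surjectivity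
    intro φ
    set Pstar : (M →ₗ[R] I) →ₗ[R] ((Fin n → R) →ₗ[R] I) := LinearMap.lcomp R I p with hPstar
    have hPinj : Function.Injective Pstar := by
      intro g₁ g₂ h
      refine LinearMap.ext fun x => ?_
      obtain ⟨v, rfl⟩ := hp x
      exact congrArg (fun t => t v) (congrArg DFunLike.coe h)
    obtain ⟨ψ, hψ⟩ := hE.out Pstar hPinj φ
    obtain ⟨y, hy⟩ := (thetaMap_bijective_free n I E).2 ψ
    refine ⟨LinearMap.rTensor _ p y, ?_⟩
    refine LinearMap.ext fun f => ?_
    rw [thetaMap_naturality p y f, hy]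
    exact hψ f

lemma flat_hom_of_injective [IsNoetherianRing R] (I E : Type u) [AddCommGroup I] [Module R I]
    [AddCommGroup E] [Module R E] (hI : Module.Injective R I) (hE : Module.Injective R E) :
    Module.Flat R (I →ₗ[R] E) := by
  rw [Module.Flat.iff_rTensor_injective]
  intro J hJ
  haveI : Module.Finite R J := Module.Finite.iff_fg.mpr hJ
  have hres : ∀ f : J →ₗ[R] I, ∃ F : R →ₗ[R] I, F ∘ₗ J.subtype = f := by
    intro f
    obtain ⟨F, hF⟩ := hI.out J.subtype (Submodule.injective_subtype J) f
    exact ⟨F, LinearMap.ext hF⟩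
  intro x y hxy
  apply (thetaMap_bijective (R := R) J I E hE).1
  refine LinearMap.ext fun f => ?_
  obtain ⟨F, hF⟩ := hres f
  rw [← hF, ← thetaMap_naturality J.subtype x F, ← thetaMap_naturality J.subtype y F, hxy]

end AuxSemidualizing

/-- If `M` is `C`-injective and `E` is injective, then `Hom_R(M, E)` is `C`-flat. -/
theorem isCFlat_hom_of_isCInjective (R : Type u) [CommRing R] [IsNoetherianRing R]
    (C : Type u) [AddCommGroup C] [Module R C] (hC : IsSemidualizing R C)
    (M : Type u) [AddCommGroup M] [Module R M] (hM : IsCInjective R C M)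
    (E : Type u) [AddCommGroup E] [Module R E] (hE : Module.Injective R E) :
    IsCFlat R C (M →ₗ[R] E) := by
  obtain ⟨I, iaddI, imodI, hI, ⟨e⟩⟩ := hM
  haveI : Module.Finite R C := hC.1
  refine ⟨I →ₗ[R] E, inferInstance, inferInstance, flat_hom_of_injective I E hI hE, ⟨?_⟩⟩
  exact (LinearEquiv.ofBijective _ (thetaMap_bijective (R := R) C I E hE)).trans
    (e.arrowCongr (LinearEquiv.refl R E))
end

section
/- Let R be a commutative Noetherian ring, C a semidualizing R-module, p a prime ideal of R, and M = Hom_R(C, E(R/p)) the (C,p)-injective R-module, where E(R/p) is the injective hull of R/p. Then M ⊗_R M ≠ 0 if and only if depth_{R_p}(C_p) = 0, i.e., the maximal ideal pR_p of R_p is an associated prime of the R_p-module C_p. -/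
open CategoryTheory

universe u

open scoped TensorProduct

/-- `f : M →ₗ[R] E` exhibits `E` as an injective hull (injective envelope) of `M`:
`E` is injective, `f` is injective, and the image of `f` is an essential submodule of `E`
(every nonzero submodule of `E` meets it nontrivially). -/
def IsInjectiveHull (R : Type u) [CommRing R] {M E : Type u}
    [AddCommGroup M] [Module R M] [AddCommGroup E] [Module R E] (f : M →ₗ[R] E) : Prop :=
  Module.Injective R E ∧ Function.Injective f ∧
    ∀ N : Submodule R E, N ≠ ⊥ → N ⊓ LinearMap.range f ≠ ⊥

set_option linter.unusedSectionVars false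

namespace DepthZeroAux

variable {R : Type*} [CommRing R] {M : Type*} [AddCommGroup M] [Module R M]

lemma mem_ass_iff' [IsNoetherianRing R] {q : Ideal R} :
    q ∈ associatedPrimes R M ↔ q.IsPrime ∧ ∃ x : M, q = (R ∙ x).annihilator := by
  rw [AssociatedPrimes.mem_iff, isAssociatedPrime_iff]
  have h : ∀ x : M, (⊥ : Submodule R M).colon {x} = (R ∙ x).annihilator := fun x => by
    ext r
    rw [Submodule.mem_colon_singleton, Submodule.mem_bot,
      Submodule.mem_annihilator_span_singleton]
  simp only [h]

lemma ass_subset_union [IsNoetherianRing R] (N : Submodule R M) :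
    associatedPrimes R M ⊆ associatedPrimes R N ∪ associatedPrimes R (M ⧸ N) := by
  rintro q hq0
  obtain ⟨hq, x, hx⟩ := mem_ass_iff'.mp hq0
  have hq' : ∀ r : R, r ∈ q ↔ r • x = 0 := fun r => by
    rw [hx, Submodule.mem_annihilator_span_singleton]
  by_cases h : (R ∙ x) ⊓ N = ⊥
  · right
    refine mem_ass_iff'.mpr ⟨hq, Submodule.Quotient.mk x, ?_⟩
    ext r
    rw [Submodule.mem_annihilator_span_singleton, ← Submodule.Quotient.mk_smul,
      Submodule.Quotient.mk_eq_zero]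
    constructor
    · intro hr
      rw [(hq' r).mp hr]
      exact N.zero_mem
    · intro hr
      have : r • x ∈ (R ∙ x) ⊓ N :=
        ⟨Submodule.smul_mem _ r (Submodule.mem_span_singleton_self x), hr⟩
      rw [h] at this
      exact (hq' r).mpr this
  · left
    obtain ⟨y, hy, hy0⟩ := Submodule.ne_bot_iff _ |>.mp h
    obtain ⟨r, rfl⟩ := Submodule.mem_span_singleton.mp hy.1
    refine mem_ass_iff'.mpr ⟨hq, ⟨⟨r • x, hy.2⟩, ?_⟩⟩
    ext a
    rw [Submodule.mem_annihilator_span_singleton]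
    have hcoe : ∀ b : R, (b • (⟨r • x, hy.2⟩ : N) = 0) ↔ b • (r • x) = 0 := by
      intro b
      rw [Subtype.ext_iff]
      rfl
    rw [hcoe]
    constructor
    · intro ha
      rw [smul_smul, mul_comm, ← smul_smul, (hq' a).mp ha, smul_zero]
    · intro ha
      rw [smul_smul] at ha
      rcases hq.mem_or_mem ((hq' _).mpr ha) with h1 | h2
      · exact h1
      · exact absurd ((hq' r).mp h2) hy0

lemma ass_finite [IsNoetherianRing R] [IsNoetherian R M] :
    (associatedPrimes R M).Finite := by
  have main : ∀ N : Submodule R M, (associatedPrimes R (M ⧸ N)).Finite := by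
    intro N
    induction N using IsNoetherian.induction with
    | _ N ih =>
    by_cases hs : Subsingleton (M ⧸ N)
    · rw [associatedPrimes.eq_empty_of_subsingleton]
      exact Set.finite_empty
    have hnt : Nontrivial (M ⧸ N) := not_subsingleton_iff_nontrivial.mp hs
    obtain ⟨q, hqp, xb, hxb⟩ := (associatedPrimes.nonempty R (M ⧸ N)).imp fun _ h => mem_ass_iff'.mp h
    obtain ⟨x, rfl⟩ := Submodule.Quotient.mk_surjective N xb
    set K : Submodule R (M ⧸ N) := R ∙ Submodule.Quotient.mk x with hK
    set T : Submodule R M := K.comap N.mkQ with hT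
    have hxmem : Submodule.Quotient.mk x ∈ K := Submodule.mem_span_singleton_self _
    have hxne : (Submodule.Quotient.mk x : M ⧸ N) ≠ 0 := by
      intro h0
      apply hqp.ne_top
      rw [hxb, hK, h0, Submodule.span_zero_singleton, Submodule.annihilator_bot]
    have hNT : N < T := by
      refine lt_of_le_of_ne (fun n hn => ?_) (fun h => ?_)
      · show N.mkQ n ∈ K
        rw [show N.mkQ n = 0 by
          rwa [Submodule.mkQ_apply, Submodule.Quotient.mk_eq_zero]]
        exact K.zero_mem
      · apply hxne
        rw [Submodule.Quotient.mk_eq_zero]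
        rw [h]
        exact hxmem
    have hmap : T.map N.mkQ = K := by
      rw [hT, Submodule.map_comap_eq, Submodule.range_mkQ, top_inf_eq]
    have hfin2 : (associatedPrimes R ((M ⧸ N) ⧸ K)).Finite := by
      have e := Submodule.quotientQuotientEquivQuotient N T hNT.le
      rw [hmap] at e
      rw [LinearEquiv.AssociatedPrimes.eq e]
      exact ih T hNT
    have hKass : associatedPrimes R K ⊆ {q} := by
      rintro q' hq0
      obtain ⟨hq', z, hz⟩ := mem_ass_iff'.mp hq0
      obtain ⟨c, hc⟩ := Submodule.mem_span_singleton.mp z.2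
      have hmemq : ∀ r : R, r ∈ q ↔ r • Submodule.Quotient.mk x = 0 := fun r => by
        rw [hxb, hK, Submodule.mem_annihilator_span_singleton]
      have hmemq' : ∀ r : R, r ∈ q' ↔ r • (z : M ⧸ N) = 0 := fun r => by
        rw [hz, Submodule.mem_annihilator_span_singleton, Subtype.ext_iff]
        rfl
      have hz0 : (z : M ⧸ N) ≠ 0 := by
        intro h0
        apply hq'.ne_top
        rw [hz, show z = 0 from Subtype.ext h0, Submodule.span_zero_singleton,
          Submodule.annihilator_bot]
      have hcq : c ∉ q := by
        intro hcq
        apply hz0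
        rw [← hc, (hmemq c).mp hcq]
      simp only [Set.mem_singleton_iff]
      ext a
      rw [hmemq, hmemq']
      constructor
      · intro ha
        rw [← hc, smul_smul] at ha
        rcases hqp.mem_or_mem ((hmemq (c * a)).mpr (by rwa [mul_comm] at ha)) with h1 | h2
        · exact absurd h1 hcq
        · exact (hmemq a).mp h2
      · intro ha
        rw [← hc, smul_comm, ha, smul_zero]
    have := ass_subset_union K
    exact ((Set.finite_singleton q).union hfin2).subset
      (this.trans (Set.union_subset_union hKass (le_refl _)))
  have e0 : M ≃ₗ[R] M ⧸ (⊥ : Submodule R M) := (Submodule.quotEquivOfEqBot ⊥ rfl).symm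
  rw [LinearEquiv.AssociatedPrimes.eq e0]
  exact main ⊥

lemma exists_regular_of_not_assoc {S : Type*} [CommRing S] [IsLocalRing S] [IsNoetherianRing S]
    (N : Type*) [AddCommGroup N] [Module S N] [IsNoetherian S N]
    (h : IsLocalRing.maximalIdeal S ∉ associatedPrimes S N) :
    ∃ r ∈ IsLocalRing.maximalIdeal S, ∀ y : N, r • y = 0 → y = 0 := by
  by_cases hs : Subsingleton N
  · exact ⟨0, Ideal.zero_mem _, fun y _ => Subsingleton.elim y 0⟩
  haveI : Nontrivial N := not_subsingleton_iff_nontrivial.mp hs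
  by_contra hcon
  push_neg at hcon
  have hfin : (associatedPrimes S N).Finite := ass_finite
  classical
  set t := hfin.toFinset with ht
  have hsub : (IsLocalRing.maximalIdeal S : Set S) ⊆ ⋃ q ∈ t, (q : Set S) := by
    intro r hr
    obtain ⟨y, hy1, hy2⟩ := hcon r hr
    obtain ⟨P, hP, hP2⟩ := exists_le_isAssociatedPrime_of_isNoetherianRing S y hy2
    have hrP : r ∈ P := hP2 (by rw [Submodule.mem_colon_singleton, Submodule.mem_bot]; exact hy1)
    exact Set.mem_biUnion (hfin.mem_toFinset.mpr hP) hrP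
  obtain ⟨q, hq, hle⟩ := (Ideal.subset_union_prime (⊥ : Ideal S) ⊥
    (fun q hq _ _ => (hfin.mem_toFinset.mp hq).isPrime)).mp hsub
  have hq' := hfin.mem_toFinset.mp hq
  have : IsLocalRing.maximalIdeal S = q :=
    le_antisymm hle (IsLocalRing.le_maximalIdeal hq'.isPrime.ne_top)
  exact h (this ▸ hq')


variable {R : Type u} [CommRing R] {p : Ideal R} [p.IsPrime]
  {E : Type u} [AddCommGroup E] [Module R E] {f : (R ⧸ p) →ₗ[R] E}

variable {R : Type u} [CommRing R] {p : Ideal R} [p.IsPrime]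
  {E : Type u} [AddCommGroup E] [Module R E] {f : (R ⧸ p) →ₗ[R] E}

lemma smul_inj (hE : IsInjectiveHull R f) {s : R} (hs : s ∉ p) {x : E}
    (hx : s • x = 0) : x = 0 := by
  by_contra hx0
  have hK : LinearMap.ker (LinearMap.lsmul R E s) ≠ ⊥ := by
    intro hbot
    apply hx0
    have : x ∈ LinearMap.ker (LinearMap.lsmul R E s) := by
      simpa [LinearMap.mem_ker] using hx
    rwa [hbot, Submodule.mem_bot] at this
  obtain ⟨w, hw, hw0⟩ := Submodule.ne_bot_iff _ |>.mp (hE.2.2 _ hK)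
  obtain ⟨z, rfl⟩ := hw.2
  obtain ⟨z0, rfl⟩ := Submodule.Quotient.mk_surjective p z
  have hker : s • f (Submodule.Quotient.mk z0) = 0 := by
    have := hw.1
    simpa [LinearMap.mem_ker] using this
  have hz : s • (Submodule.Quotient.mk z0 : R ⧸ p) = 0 :=
    hE.2.1 (by rw [map_smul, hker, map_zero])
  rw [← Submodule.Quotient.mk_smul, Submodule.Quotient.mk_eq_zero, smul_eq_mul] at hz
  have hz0 : z0 ∈ p := (Ideal.IsPrime.mem_or_mem ‹_› hz).resolve_left hs
  apply hw0
  rw [show (Submodule.Quotient.mk z0 : R ⧸ p) = 0 from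
    (Submodule.Quotient.mk_eq_zero _).mpr hz0, map_zero]

lemma pow_smul_eq_zero [IsNoetherianRing R] (hE : IsInjectiveHull R f) {a : R} (ha : a ∈ p)
    (x : E) : ∃ n : ℕ, a ^ n • x = 0 := by
  have hmono : Monotone fun n : ℕ => (R ∙ (a ^ n • x)).annihilator := by
    apply monotone_nat_of_le_succ
    intro n r hr
    rw [Submodule.mem_annihilator_span_singleton] at hr ⊢
    rw [pow_succ', mul_smul, smul_comm, hr, smul_zero]
  obtain ⟨n, hn⟩ := monotone_stabilizes_iff_noetherian.mpr
    (isNoetherianRing_iff.mp ‹_›) ⟨_, hmono⟩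
  refine ⟨n, ?_⟩
  by_contra hy0
  have hKne : (R ∙ (a ^ n • x)) ≠ ⊥ := by
    rwa [Ne, Submodule.span_singleton_eq_bot]
  obtain ⟨w, hw, hw0⟩ := Submodule.ne_bot_iff _ |>.mp (hE.2.2 _ hKne)
  obtain ⟨r, hr⟩ := Submodule.mem_span_singleton.mp hw.1
  obtain ⟨z, hz⟩ := hw.2
  obtain ⟨z0, rfl⟩ := Submodule.Quotient.mk_surjective p z
  have haw : a • w = 0 := by
    rw [← hz, ← map_smul, ← Submodule.Quotient.mk_smul,
      (Submodule.Quotient.mk_eq_zero _).mpr (by simpa [smul_eq_mul] using p.mul_mem_right z0 ha),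
      map_zero]
  have hrmem : r ∈ (R ∙ (a ^ (n+1) • x)).annihilator := by
    rw [Submodule.mem_annihilator_span_singleton, pow_succ', mul_smul, smul_comm, hr, haw]
  have : r ∈ (R ∙ (a ^ n • x)).annihilator := by
    have heq := hn (n+1) (Nat.le_succ n)
    simp only [OrderHom.coe_mk] at heq
    rw [heq]
    exact hrmem
  rw [Submodule.mem_annihilator_span_singleton] at this
  rw [← hr] at hw0
  exact hw0 this

lemma pow_smul_hom_eq_zero [IsNoetherianRing R] (hE : IsInjectiveHull R f)
    {C : Type u} [AddCommGroup C] [Module R C] [Module.Finite R C]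
    {a : R} (ha : a ∈ p) (φ : C →ₗ[R] E) : ∃ n : ℕ, a ^ n • φ = 0 := by
  classical
  obtain ⟨s, hs⟩ := Module.finite_def.mp ‹Module.Finite R C›
  choose ν hν using fun c : C => pow_smul_eq_zero hE ha (φ c)
  refine ⟨s.sup ν, ?_⟩
  have hle : (⊤ : Submodule R C) ≤ LinearMap.ker (a ^ s.sup ν • φ) := by
    rw [← hs]
    rw [Submodule.span_le]
    intro c hc
    have hcle : ν c ≤ s.sup ν := Finset.le_sup hc
    show a ^ s.sup ν • φ c = 0
    rw [← Nat.sub_add_cancel hcle, pow_add, mul_smul, hν c, smul_zero]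
  ext c
  exact hle Submodule.mem_top

omit [p.IsPrime] in
/-- Factor a map through multiplication and extend using injectivity of `E`. -/
lemma extend_factor (hE : IsInjectiveHull R f) {A C : Type u}
    [AddCommGroup A] [Module R A] [AddCommGroup C] [Module R C]
    (g : A →ₗ[R] C) (σ : A →ₗ[R] E) (hker : LinearMap.ker g ≤ LinearMap.ker σ) :
    ∃ ψ : C →ₗ[R] E, ∀ x : A, ψ (g x) = σ x := by
  set σq := Submodule.liftQ (LinearMap.ker g) σ hker with hσq
  set e := g.quotKerEquivRange with he
  set ψ0 : LinearMap.range g →ₗ[R] E := σq ∘ₗ (e.symm : LinearMap.range g →ₗ[R] _) with hψ0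
  obtain ⟨ψ, hψ⟩ := hE.1.out (LinearMap.range g).subtype (Submodule.injective_subtype _) ψ0
  refine ⟨ψ, fun x => ?_⟩
  have hc : g x ∈ LinearMap.range g := ⟨x, rfl⟩
  have h3 : ψ (g x) = ψ0 ⟨g x, hc⟩ := hψ ⟨g x, hc⟩
  rw [h3]
  have h4 : e.symm ⟨g x, hc⟩ = Submodule.Quotient.mk x := by
    rw [LinearEquiv.symm_apply_eq]
    exact Subtype.ext (g.quotKerEquivRange_apply_mk x).symm
  show σq (e.symm ⟨g x, hc⟩) = σ x
  rw [h4, Submodule.liftQ_apply]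

lemma smul_surj (hE : IsInjectiveHull R f) {C : Type u} [AddCommGroup C] [Module R C]
    {a : R}
    (hreg : ∀ y : LocalizedModule p.primeCompl C, a • y = 0 → y = 0)
    (φ : C →ₗ[R] E) : ∃ ψ : C →ₗ[R] E, a • ψ = φ := by
  have hker : LinearMap.ker (LinearMap.lsmul R C a) ≤ LinearMap.ker φ := by
    intro k hk
    have hak : a • k = 0 := hk
    have h1 : a • LocalizedModule.mk k (1 : p.primeCompl) = 0 := by
      rw [LocalizedModule.smul'_mk, hak, LocalizedModule.zero_mk]
    have h2 := hreg _ h1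
    rw [show (0 : LocalizedModule p.primeCompl C) = LocalizedModule.mk 0 1 from
      (LocalizedModule.zero_mk 1).symm, LocalizedModule.mk_eq] at h2
    obtain ⟨u, hu⟩ := h2
    simp only [one_smul, smul_zero] at hu
    show φ k = 0
    refine smul_inj hE u.2 ?_
    rw [← map_smul, show (u : R) • k = 0 from hu, map_zero]
  obtain ⟨ψ, hψ⟩ := extend_factor hE (LinearMap.lsmul R C a) φ hker
  refine ⟨ψ, ?_⟩
  ext c
  rw [LinearMap.smul_apply, ← map_smul]
  exact hψ c

set_option maxHeartbeats 1000000 in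
open scoped TensorProduct in
lemma dirA (R : Type u) [CommRing R] [IsNoetherianRing R]
    (C : Type u) [AddCommGroup C] [Module R C]
    (p : Ideal R) [p.IsPrime]
    (E : Type u) [AddCommGroup E] [Module R E] (f : (R ⧸ p) →ₗ[R] E)
    (hE : IsInjectiveHull R f)
    (hass : IsLocalRing.maximalIdeal (Localization.AtPrime p) ∈
        associatedPrimes (Localization.AtPrime p) (LocalizedModule p.primeCompl C)) :
    Nontrivial ((C →ₗ[R] E) ⊗[R] (C →ₗ[R] E)) := by
  classical
  haveI : IsNoetherianRing (Localization.AtPrime p) :=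
    IsLocalization.isNoetherianRing p.primeCompl _ ‹_›
  obtain ⟨hmp, x, hx⟩ := mem_ass_iff'.mp hass
  obtain ⟨c₀, s₀, rfl⟩ : ∃ (c : C) (s : p.primeCompl), x = LocalizedModule.mk c s := by
    induction x using LocalizedModule.induction_on with
    | _ c s => exact ⟨c, s, rfl⟩
  have key0 : ∀ r : R, algebraMap R (Localization.AtPrime p) r ∈
      IsLocalRing.maximalIdeal (Localization.AtPrime p) ↔ r ∈ p := fun r =>
    IsLocalization.AtPrime.to_map_mem_maximal_iff _ p r
  have key : ∀ r : R, r ∈ p ↔ r • LocalizedModule.mk c₀ s₀ = 0 := by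
    intro r
    rw [← key0 r, hx, Submodule.mem_annihilator_span_singleton, algebraMap_smul]
  have key1 : ∀ r : R, r • c₀ = 0 → r ∈ p := by
    intro r h
    rw [key r, LocalizedModule.smul'_mk, h, LocalizedModule.zero_mk]
  have key2 : ∀ a : R, a ∈ p → ∃ u : p.primeCompl, (u : R) • (a • c₀) = 0 := by
    intro a ha
    have h2 := (key a).mp ha
    rw [LocalizedModule.smul'_mk] at h2
    rw [show (0 : LocalizedModule p.primeCompl C) = LocalizedModule.mk 0 1 from
      (LocalizedModule.zero_mk 1).symm, LocalizedModule.mk_eq] at h2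
    obtain ⟨u, hu⟩ := h2
    simp only [one_smul, smul_zero] at hu
    exact ⟨u, hu⟩
  -- construct φ
  have hker : LinearMap.ker (LinearMap.toSpanSingleton R C c₀) ≤
      LinearMap.ker (f ∘ₗ p.mkQ) := by
    intro r hr
    have h1 : r • c₀ = 0 := hr
    have h2 : r ∈ p := key1 r h1
    show f (p.mkQ r) = 0
    rw [show p.mkQ r = 0 by rwa [Submodule.mkQ_apply, Submodule.Quotient.mk_eq_zero], map_zero]
  obtain ⟨φ, hφ⟩ := extend_factor hE (LinearMap.toSpanSingleton R C c₀) (f ∘ₗ p.mkQ) hker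
  have hφ1 : φ c₀ = f (Submodule.Quotient.mk 1) := by
    have := hφ 1
    rwa [LinearMap.toSpanSingleton_apply, one_smul, LinearMap.comp_apply,
      Submodule.mkQ_apply] at this
  have hfne : f (Submodule.Quotient.mk (1 : R)) ≠ 0 := by
    intro h0
    have h1 : (Submodule.Quotient.mk (1 : R) : R ⧸ p) = 0 :=
      hE.2.1 (by rw [h0, map_zero])
    rw [Submodule.Quotient.mk_eq_zero] at h1
    exact (Ideal.IsPrime.ne_top ‹p.IsPrime›) ((Ideal.eq_top_iff_one p).mpr h1)
  -- the submodule V of p-torsion elements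
  set V : Submodule R E :=
    { carrier := {e | ∀ a ∈ p, a • e = 0}
      add_mem' := fun h1 h2 => by
        intro a ha
        rw [smul_add, h1 a ha, h2 a ha, add_zero]
      zero_mem' := fun a ha => smul_zero a
      smul_mem' := fun r e he => by
        intro a ha
        rw [smul_comm, he a ha, smul_zero] } with hV
  have hmemV : ∀ ψ : C →ₗ[R] E, ψ c₀ ∈ V := by
    intro ψ a ha
    obtain ⟨u, hu⟩ := key2 a ha
    show a • ψ c₀ = 0
    rw [← map_smul]
    refine smul_inj hE u.2 ?_
    rw [← map_smul, hu, map_zero]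
  have hT : Module.IsTorsionBySet R V (p : Set R) := by
    intro v a
    ext
    exact v.2 a.1 a.2
  letI : Module (R ⧸ p) V := hT.module
  set k := FractionRing (R ⧸ p)
  set V' := LocalizedModule (nonZeroDivisors (R ⧸ p)) V with hV'
  set mkV : V →ₗ[R ⧸ p] V' := LocalizedModule.mkLinearMap (nonZeroDivisors (R ⧸ p)) V with hmkV
  set v₀ : V := ⟨f (Submodule.Quotient.mk 1), by
    intro a ha
    rw [← map_smul, ← Submodule.Quotient.mk_smul, smul_eq_mul, mul_one,
      show (Submodule.Quotient.mk a : R ⧸ p) = 0 from (Submodule.Quotient.mk_eq_zero _).mpr ha,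
      map_zero]⟩ with hv₀def
  have hv0 : v₀ ≠ 0 := fun h => hfne (congrArg Subtype.val h)
  have hVtf : ∀ u : R ⧸ p, u ≠ 0 → ∀ v : V, u • v = 0 → v = 0 := by
    intro u hu v huv
    obtain ⟨s1, rfl⟩ := Ideal.Quotient.mk_surjective u
    have hs1 : s1 ∉ p := fun h => hu (Ideal.Quotient.eq_zero_iff_mem.mpr h)
    have h1 : s1 • v = 0 := by rwa [← hT.mk_smul]
    have h2 : s1 • (v : E) = 0 := congrArg Subtype.val h1
    exact Subtype.ext (smul_inj hE hs1 h2)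
  have hmkv0 : mkV v₀ ≠ 0 := by
    intro h0
    have h1 : LocalizedModule.mk v₀ (1 : nonZeroDivisors (R ⧸ p)) = 0 := h0
    rw [show (0 : V') = LocalizedModule.mk 0 1 from (LocalizedModule.zero_mk 1).symm,
      LocalizedModule.mk_eq] at h1
    obtain ⟨u, hu⟩ := h1
    simp only [one_smul, smul_zero] at hu
    exact hv0 (hVtf u.1 (nonZeroDivisors.ne_zero u.2) v₀ hu)
  -- build the functional
  obtain ⟨W', hWc⟩ := Submodule.exists_isCompl (Submodule.span k {mkV v₀})
  obtain ⟨ℓ, hℓadd, hℓsmul, hℓφ⟩ :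
      ∃ ℓ : (C →ₗ[R] E) → k,
        (∀ ψ χ : C →ₗ[R] E, ℓ (ψ + χ) = ℓ ψ + ℓ χ) ∧
        (∀ (r : R) (ψ : C →ₗ[R] E),
          ℓ (r • ψ) = algebraMap (R ⧸ p) k (Ideal.Quotient.mk p r) * ℓ ψ) ∧
        ℓ φ ≠ 0 := by
    set π := (Submodule.span k {mkV v₀}).linearProjOfIsCompl W' hWc with hπ
    set eqv := LinearEquiv.toSpanNonzeroSingleton k V' (mkV v₀) hmkv0 with heqv
    refine ⟨fun ψ => eqv.symm (π (mkV ⟨ψ c₀, hmemV ψ⟩)), ?_, ?_, ?_⟩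
    · intro ψ χ
      have h1 : (⟨(ψ + χ) c₀, hmemV _⟩ : V) = ⟨ψ c₀, hmemV ψ⟩ + ⟨χ c₀, hmemV χ⟩ := by
        ext; rfl
      show eqv.symm (π (mkV ⟨(ψ + χ) c₀, hmemV _⟩)) = _
      rw [h1, map_add, map_add, map_add]
    · intro r ψ
      have h1 : (⟨(r • ψ) c₀, hmemV _⟩ : V) = Ideal.Quotient.mk p r • ⟨ψ c₀, hmemV ψ⟩ := by
        rw [hT.mk_smul]
        ext
        rfl
      show eqv.symm (π (mkV ⟨(r • ψ) c₀, hmemV _⟩)) = _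
      rw [h1, map_smul, ← algebraMap_smul k (Ideal.Quotient.mk p r) (mkV ⟨ψ c₀, hmemV ψ⟩),
        map_smul, map_smul, smul_eq_mul]
    · have h1 : (⟨φ c₀, hmemV φ⟩ : V) = v₀ := Subtype.ext hφ1
      show eqv.symm (π (mkV ⟨φ c₀, hmemV φ⟩)) ≠ 0
      rw [h1]
      have h2 : π (mkV v₀) = ⟨mkV v₀, Submodule.mem_span_singleton_self _⟩ :=
        Submodule.linearProjOfIsCompl_apply_left hWc ⟨mkV v₀, Submodule.mem_span_singleton_self _⟩
      rw [h2]
      intro h3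
      apply hmkv0
      have h4 := congrArg eqv h3
      rw [LinearEquiv.apply_symm_apply, map_zero] at h4
      exact congrArg Subtype.val h4
  -- bilinear map and conclusion
  obtain ⟨B, hBapp⟩ : ∃ B : (C →ₗ[R] E) →+ (C →ₗ[R] E) →+ k,
      ∀ ψ χ : C →ₗ[R] E, B ψ χ = ℓ ψ * ℓ χ := by
    refine ⟨AddMonoidHom.mk' (fun ψ => AddMonoidHom.mk' (fun χ => ℓ ψ * ℓ χ)
      (fun χ1 χ2 => by
        show ℓ ψ * ℓ (χ1 + χ2) = ℓ ψ * ℓ χ1 + ℓ ψ * ℓ χ2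
        rw [hℓadd, mul_add]))
      (fun ψ1 ψ2 => by
        ext χ
        show ℓ (ψ1 + ψ2) * ℓ χ = ℓ ψ1 * ℓ χ + ℓ ψ2 * ℓ χ
        rw [hℓadd, add_mul]), fun ψ χ => rfl⟩
  have hbal : ∀ (r : R) (m n : C →ₗ[R] E), B (r • m) n = B m (r • n) := by
    intro r m n
    rw [hBapp, hBapp, hℓsmul, hℓsmul]
    ring
  refine nontrivial_of_ne (φ ⊗ₜ φ) 0 ?_
  intro h0
  have h1 : TensorProduct.liftAddHom B hbal (φ ⊗ₜ φ) = ℓ φ * ℓ φ := by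
    rw [TensorProduct.liftAddHom_tmul, hBapp]
  rw [h0, map_zero] at h1
  exact hℓφ (mul_self_eq_zero.mp h1.symm)

end DepthZeroAux

/-- For a prime `p` and the `(C,p)`-injective module `M = Hom_R(C, E(R/p))`:
`M ⊗_R M ≠ 0` iff `depth_{R_p}(C_p) = 0`, i.e. the maximal ideal of `R_p` is an
associated prime of `C_p`. -/
theorem nontrivial_tensor_self_iff_depth_eq_zero (R : Type u) [CommRing R] [IsNoetherianRing R]
    (C : Type u) [AddCommGroup C] [Module R C] (hC : IsSemidualizing R C)
    (p : Ideal R) [p.IsPrime]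
    (E : Type u) [AddCommGroup E] [Module R E] (f : (R ⧸ p) →ₗ[R] E)
    (hE : IsInjectiveHull R f) :
    Nontrivial ((C →ₗ[R] E) ⊗[R] (C →ₗ[R] E)) ↔
      IsLocalRing.maximalIdeal (Localization.AtPrime p) ∈
        associatedPrimes (Localization.AtPrime p) (LocalizedModule p.primeCompl C) := by
  classical
  haveI : Module.Finite R C := hC.1
  constructor
  · intro hnt
    by_contra hm
    haveI : IsNoetherianRing (Localization.AtPrime p) :=
      IsLocalization.isNoetherianRing p.primeCompl _ ‹_›
    haveI : Module.Finite (Localization.AtPrime p) (LocalizedModule p.primeCompl C) :=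
      Module.Finite.of_isLocalizedModule p.primeCompl (LocalizedModule.mkLinearMap p.primeCompl C)
    obtain ⟨r, hr, hrreg⟩ := DepthZeroAux.exists_regular_of_not_assoc (LocalizedModule p.primeCompl C) hm
    -- extract numerator
    obtain ⟨⟨a, s⟩, hras⟩ := IsLocalization.surj p.primeCompl r
    have hmem : algebraMap R (Localization.AtPrime p) a ∈
        IsLocalRing.maximalIdeal (Localization.AtPrime p) := by
      rw [← hras]
      exact Ideal.mul_mem_right _ _ hr
    have hap : a ∈ p := by
      rwa [IsLocalization.AtPrime.to_map_mem_maximal_iff _ p] at hmem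
    have hareg : ∀ y : LocalizedModule p.primeCompl C, a • y = 0 → y = 0 := by
      intro y hy
      have h1 : (algebraMap R (Localization.AtPrime p) a) • y = 0 := by
        rwa [algebraMap_smul]
      rw [← hras, mul_smul] at h1
      have h2 : (algebraMap R (Localization.AtPrime p)) (s : R) • y = 0 := hrreg _ h1
      have h3 : (algebraMap R (Localization.AtPrime p)) (s : R) • y
          = (algebraMap R (Localization.AtPrime p)) (s : R) • (0 : LocalizedModule p.primeCompl C) := by
        rw [smul_zero]; exact h2
      exact (IsLocalization.map_units (Localization.AtPrime p) s).smul_left_cancel.mp h3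
    -- subsingleton of tensor
    have hsub : ∀ z : (C →ₗ[R] E) ⊗[R] (C →ₗ[R] E), z = 0 := by
      intro z
      induction z with
      | zero => rfl
      | tmul x y =>
        obtain ⟨n, hn⟩ := DepthZeroAux.pow_smul_hom_eq_zero hE hap y
        have hdiv : ∀ m : ℕ, ∀ x' : C →ₗ[R] E, ∃ x'', a ^ m • x'' = x' := by
          intro m
          induction m with
          | zero => exact fun x' => ⟨x', by rw [pow_zero, one_smul]⟩
          | succ m ih =>
            intro x'
            obtain ⟨x1, hx1⟩ := ih x'
            obtain ⟨x2, hx2⟩ := DepthZeroAux.smul_surj hE hareg x1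
            exact ⟨x2, by rw [pow_succ, mul_smul, hx2, hx1]⟩
        obtain ⟨x'', hx''⟩ := hdiv n x
        rw [← hx'', TensorProduct.smul_tmul, hn, TensorProduct.tmul_zero]
      | add u v hu hv => rw [hu, hv, add_zero]
    obtain ⟨u, v, huv⟩ := hnt
    exact huv ((hsub u).trans (hsub v).symm)
  · exact fun hass => DepthZeroAux.dirA R C p E f hE hass
end

section
/- Let (R, m) be a complete commutative Noetherian local ring with depth(R) > 0, let C be a semidualizing R-module, and let E(R/m) be the injective hull of the residue field R/m. Then Hom_R(C, E(R/m)) ⊗_R Hom_R(C, E(R/m)) = 0, while Hom_R(C, E(R/m)) ≠ 0. -/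
open CategoryTheory

universe u

open scoped TensorProduct

theorem auxAss_subset {R : Type u} [CommRing R] [IsNoetherianRing R] {M : Type u} [AddCommGroup M] [Module R M] (N : Submodule R M) :
    associatedPrimes R M ⊆ associatedPrimes R N ∪ associatedPrimes R (M ⧸ N) := by
  rintro p hp'
  obtain ⟨hp, x, hx⟩ := isAssociatedPrime_iff.mp hp'
  have hmem : ∀ r : R, r ∈ p ↔ r • x = 0 := by
    intro r; rw [hx, Submodule.mem_colon_singleton, Submodule.mem_bot]
  by_cases h : ∀ s : R, s • x ∈ N → s • x = 0
  · right
    refine isAssociatedPrime_iff.mpr ⟨hp, Submodule.Quotient.mk x, ?_⟩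
    ext r
    rw [Submodule.mem_colon_singleton, Submodule.mem_bot, ← Submodule.Quotient.mk_smul,
      Submodule.Quotient.mk_eq_zero]
    constructor
    · intro hr; rw [(hmem r).mp hr]; exact N.zero_mem
    · intro hr; exact (hmem r).mpr (h r hr)
  · left
    push_neg at h
    obtain ⟨s, hsN, hs0⟩ := h
    have hsp : s ∉ p := fun hs => hs0 ((hmem s).mp hs)
    refine isAssociatedPrime_iff.mpr ⟨hp, ⟨s • x, hsN⟩, ?_⟩
    ext r
    rw [Submodule.mem_colon_singleton, Submodule.mem_bot]
    have : (r • (⟨s • x, hsN⟩ : N) = 0) ↔ r • (s • x) = 0 := by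
      constructor
      · intro hh; exact congrArg Subtype.val hh
      · intro hh; exact Subtype.ext hh
    rw [this, ← mul_smul]
    constructor
    · intro hr; exact (hmem (r * s)).mp (Ideal.mul_mem_right s p hr)
    · intro hr; rcases hp.mem_or_mem ((hmem (r * s)).mpr hr) with h1 | h1
      · exact h1
      · exact absurd h1 hsp

theorem auxAss_prime_quotient {R : Type u} [CommRing R] [IsNoetherianRing R] {p : Ideal R} (hp : p.IsPrime) :
    associatedPrimes R (R ⧸ p) = {p} := by
  rw [associatedPrimes.eq_singleton_of_isPrimary hp.isPrimary, hp.radical]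

theorem auxAss_finite {R : Type u} [CommRing R] [IsNoetherianRing R] (M : Type u)
    [AddCommGroup M] [Module R M] [Module.Finite R M] :
    (associatedPrimes R M).Finite := by
  have key : ∀ N : Submodule R M, (associatedPrimes R (M ⧸ N)).Finite := by
    have wf : WellFounded ((· > ·) : Submodule R M → Submodule R M → Prop) :=
      (isNoetherian_iff (R := R) (M := M)).mp inferInstance
    intro N
    induction N using wf.induction with
    | _ N IH =>
    rcases subsingleton_or_nontrivial (M ⧸ N) with hss | hnt
    · rw [associatedPrimes.eq_empty_of_subsingleton]; exact Set.finite_empty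
    · obtain ⟨p, hp'⟩ := associatedPrimes.nonempty R (M ⧸ N)
      obtain ⟨hprime, xb, hx⟩ := isAssociatedPrime_iff.mp (AssociatedPrimes.mem_iff.mp hp')
      have hxb0 : xb ≠ 0 := by
        rintro rfl
        rw [Submodule.colon_singleton_zero] at hx
        exact hprime.ne_top hx
      set N' : Submodule R M := Submodule.comap N.mkQ (Submodule.span R {xb}) with hN'
      have hle : N ≤ N' := by
        intro n hn
        simp only [hN', Submodule.mem_comap, Submodule.mkQ_apply]
        rw [(Submodule.Quotient.mk_eq_zero N).mpr hn]
        exact Submodule.zero_mem _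
      have hlt : N < N' := by
        obtain ⟨x0, hx0⟩ := Submodule.mkQ_surjective N xb
        refine lt_of_le_of_ne hle (fun hEq => hxb0 ?_)
        have hx0N' : x0 ∈ N' := by
          simp only [hN', Submodule.mem_comap, hx0]
          exact Submodule.mem_span_singleton_self xb
        rw [← hEq] at hx0N'
        rw [← hx0, Submodule.mkQ_apply, Submodule.Quotient.mk_eq_zero]
        exact hx0N'
      have hmap : N'.map N.mkQ = Submodule.span R {xb} := by
        rw [hN', Submodule.map_comap_eq, Submodule.range_mkQ, top_inf_eq]
      refine Set.Finite.subset (Set.Finite.union ?_ ?_)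
        (auxAss_subset (N := N'.map N.mkQ) (M := M ⧸ N))
      · -- Ass of the cyclic submodule is {p}
        have hker : LinearMap.ker (LinearMap.toSpanSingleton R (M ⧸ N) xb) = p := by
          ext r
          rw [LinearMap.mem_ker, LinearMap.toSpanSingleton_apply, hx,
            Submodule.mem_colon_singleton, Submodule.mem_bot]
        have e1 : (R ⧸ p) ≃ₗ[R]
            LinearMap.range (LinearMap.toSpanSingleton R (M ⧸ N) xb) :=
          (Submodule.quotEquivOfEq _ _ hker.symm).trans
            (LinearMap.toSpanSingleton R (M ⧸ N) xb).quotKerEquivRange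
        have e2 : (N'.map N.mkQ : Submodule R (M ⧸ N)) =
            LinearMap.range (LinearMap.toSpanSingleton R (M ⧸ N) xb) := by
          rw [hmap, ← LinearMap.span_singleton_eq_range]
        rw [show (associatedPrimes R (N'.map N.mkQ)) =
            associatedPrimes R (R ⧸ p) from ?_]
        · rw [auxAss_prime_quotient hprime]; exact Set.finite_singleton p
        · refine (LinearEquiv.AssociatedPrimes.eq ?_).symm
          exact e1.trans (LinearEquiv.ofEq _ _ e2.symm)
      · have e3 : ((M ⧸ N) ⧸ N'.map N.mkQ) ≃ₗ[R] M ⧸ N' :=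
          Submodule.quotientQuotientEquivQuotient N N' hle
        rw [LinearEquiv.AssociatedPrimes.eq e3]
        exact IH N' hlt
  have e : (M ⧸ (⊥ : Submodule R M)) ≃ₗ[R] M := Submodule.quotEquivOfEqBot ⊥ rfl
  rw [← LinearEquiv.AssociatedPrimes.eq e]
  exact key ⊥

theorem aux_max_isAssociated {R : Type u} [CommRing R] [IsNoetherianRing R] [IsLocalRing R]
    (C : Type u) [AddCommGroup C] [Module R C] [Module.Finite R C]
    (h : ∀ y ∈ IsLocalRing.maximalIdeal R, ∃ c : C, c ≠ 0 ∧ y • c = 0) :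
    IsAssociatedPrime (IsLocalRing.maximalIdeal R) C := by
  classical
  have hfin := auxAss_finite (R := R) C
  set S : Finset (Ideal R) := hfin.toFinset with hS
  have hsub : (IsLocalRing.maximalIdeal R : Set R) ⊆ ⋃ p ∈ (S : Set (Ideal R)), (id p : Ideal R) := by
    intro y hy
    obtain ⟨c, hc0, hyc⟩ := h y hy
    obtain ⟨P, hP, hle⟩ := exists_le_isAssociatedPrime_of_isNoetherianRing R c hc0
    have hPS : P ∈ (S : Set (Ideal R)) := by
      simp only [hS, Finset.coe_sort_coe, Set.Finite.coe_toFinset]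
      exact hP
    refine Set.mem_biUnion hPS (hle ?_)
    rwa [Submodule.mem_colon_singleton, Submodule.mem_bot]
  have hprimes : ∀ i ∈ S, i ≠ (⊥ : Ideal R) → i ≠ (⊥ : Ideal R) → Ideal.IsPrime (id i) := by
    intro i hi _ _
    have : i ∈ associatedPrimes R C := by rwa [hS, hfin.mem_toFinset] at hi
    exact this.isPrime
  obtain ⟨p, hpS, hlep⟩ := (Ideal.subset_union_prime (f := fun i : Ideal R => id i)
    (⊥ : Ideal R) (⊥ : Ideal R) hprimes).mp hsub
  have hpass : IsAssociatedPrime p C := by rwa [hS, hfin.mem_toFinset] at hpS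
  have : IsLocalRing.maximalIdeal R = p :=
    (IsLocalRing.maximalIdeal.isMaximal R).eq_of_le hpass.isPrime.ne_top hlep
  rwa [this]

theorem aux_torsion {R : Type u} [CommRing R] [IsNoetherianRing R] [IsLocalRing R]
    {E : Type u} [AddCommGroup E] [Module R E]
    (f : (R ⧸ IsLocalRing.maximalIdeal R) →ₗ[R] E)
    (hess : ∀ N : Submodule R E, N ≠ ⊥ → N ⊓ LinearMap.range f ≠ ⊥)
    {y : R} (hy : y ∈ IsLocalRing.maximalIdeal R) (e : E) : ∃ n : ℕ, y ^ n • e = 0 := by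
  have mono : Monotone (fun n => LinearMap.ker (LinearMap.toSpanSingleton R E (y ^ n • e))) := by
    apply monotone_nat_of_le_succ
    intro n r hr
    rw [LinearMap.mem_ker, LinearMap.toSpanSingleton_apply, smul_smul] at hr ⊢
    have hsc : r * y ^ (n + 1) = y * (r * y ^ n) := by ring
    rw [hsc, mul_smul, hr, smul_zero]
  obtain ⟨NN, hNN⟩ := monotone_stabilizes_iff_noetherian.mpr inferInstance ⟨_, mono⟩
  refine ⟨NN, by_contra fun h0 => ?_⟩
  have hSne : Submodule.span R {y ^ NN • e} ≠ ⊥ := by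
    rwa [Ne, Submodule.span_singleton_eq_bot]
  obtain ⟨t, htmem, ht0⟩ := (Submodule.ne_bot_iff _).mp (hess _ hSne)
  obtain ⟨htS, htR⟩ := Submodule.mem_inf.mp htmem
  obtain ⟨r, hr⟩ := Submodule.mem_span_singleton.mp htS
  obtain ⟨s, hs⟩ := htR
  obtain ⟨s0, rfl⟩ := Submodule.Quotient.mk_surjective _ s
  have hyt : y • t = 0 := by
    rw [← hs, ← map_smul]
    have h1 : y • (Submodule.Quotient.mk s0 : R ⧸ IsLocalRing.maximalIdeal R) = 0 := by
      rw [← Submodule.Quotient.mk_smul, Submodule.Quotient.mk_eq_zero, smul_eq_mul]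
      exact Ideal.mul_mem_right s0 _ hy
    rw [h1, map_zero]
  have hrk : r ∈ LinearMap.ker (LinearMap.toSpanSingleton R E (y ^ (NN + 1) • e)) := by
    rw [LinearMap.mem_ker, LinearMap.toSpanSingleton_apply, smul_smul]
    have hsc : r * y ^ (NN + 1) = y * (r * y ^ NN) := by ring
    rw [hsc, mul_smul, ← smul_smul, hr, hyt]
  have hrN : r ∈ LinearMap.ker (LinearMap.toSpanSingleton R E (y ^ NN • e)) := by
    have h2 : LinearMap.ker (LinearMap.toSpanSingleton R E (y ^ NN • e)) =
        LinearMap.ker (LinearMap.toSpanSingleton R E (y ^ (NN + 1) • e)) :=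
      hNN (NN + 1) (Nat.le_succ NN)
    rw [h2]
    exact hrk
  rw [LinearMap.mem_ker, LinearMap.toSpanSingleton_apply, hr] at hrN
  exact ht0 hrN

/-- Over a complete Noetherian local ring `(R, 𝔪)` of positive depth (i.e. `𝔪` contains a
nonzerodivisor), for `E = E(R/𝔪)` the injective hull of the residue field we have
`Hom_R(C, E) ⊗_R Hom_R(C, E) = 0`, while `Hom_R(C, E) ≠ 0`. -/
theorem tensor_self_eq_zero_of_complete_of_depth_pos (R : Type u) [CommRing R]
    [IsNoetherianRing R] [IsLocalRing R] [IsAdicComplete (IsLocalRing.maximalIdeal R) R]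
    (hdepth : ∃ x ∈ IsLocalRing.maximalIdeal R, x ∈ nonZeroDivisors R)
    (C : Type u) [AddCommGroup C] [Module R C] (hC : IsSemidualizing R C)
    (E : Type u) [AddCommGroup E] [Module R E]
    (f : (R ⧸ IsLocalRing.maximalIdeal R) →ₗ[R] E) (hE : IsInjectiveHull R f) :
    Subsingleton ((C →ₗ[R] E) ⊗[R] (C →ₗ[R] E)) ∧ Nontrivial (C →ₗ[R] E) := by
  classical
  obtain ⟨x, hxm, hxreg⟩ := hdepth
  obtain ⟨hfin, hbij, -⟩ := hC
  haveI : Module.Finite R C := hfin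
  obtain ⟨hEinj, hfinj, hess⟩ := hE
  -- C is nontrivial
  haveI hCnt : Nontrivial C := by
    by_contra hnt
    rw [not_nontrivial_iff_subsingleton] at hnt
    haveI : Subsingleton (Module.End R C) := by
      constructor; intro a b; ext c; exact Subsingleton.elim _ _
    exact not_subsingleton R (hbij.1.subsingleton)
  -- a surjective linear map lam : C → R/m
  obtain ⟨lam, hlam⟩ : ∃ lam : C →ₗ[R] (R ⧸ IsLocalRing.maximalIdeal R),
      Function.Surjective lam := by
    haveI : IsCoatomic (Submodule R C) :=
      CompleteLattice.coatomic_of_top_compact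
        ((Submodule.fg_iff_compact _).mp Module.Finite.fg_top)
    haveI : Nontrivial (Submodule R C) := ⟨⊥, ⊤, by
      intro hbt
      obtain ⟨c, hc⟩ := exists_ne (0 : C)
      have hcb : c ∈ (⊥ : Submodule R C) := by rw [hbt]; exact Submodule.mem_top
      exact hc ((Submodule.mem_bot R).mp hcb)⟩
    obtain ⟨N, hN⟩ := IsCoatomic.exists_coatom (α := Submodule R C)
    haveI hsimp : IsSimpleModule R (C ⧸ N) := isSimpleModule_iff_isCoatom.mpr hN
    haveI : Nontrivial (C ⧸ N) := IsSimpleModule.nontrivial R (C ⧸ N)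
    obtain ⟨uu, hu⟩ := exists_ne (0 : C ⧸ N)
    have hspan : Submodule.span R {uu} = ⊤ := by
      rcases eq_bot_or_eq_top (Submodule.span R {uu}) with hb | ht
      · exact absurd (Submodule.span_singleton_eq_bot.mp hb) hu
      · exact ht
    set g : R →ₗ[R] (C ⧸ N) := LinearMap.toSpanSingleton R (C ⧸ N) uu with hg
    have hgsurj : Function.Surjective g := by
      rw [← LinearMap.range_eq_top, ← LinearMap.span_singleton_eq_range, hspan]
    have hJ : LinearMap.ker g ≤ IsLocalRing.maximalIdeal R := by
      apply IsLocalRing.le_maximalIdeal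
      intro hJtop
      have : (1 : R) ∈ LinearMap.ker g := hJtop ▸ Submodule.mem_top
      rw [LinearMap.mem_ker, hg, LinearMap.toSpanSingleton_apply, one_smul] at this
      exact hu this
    set e1 : (R ⧸ LinearMap.ker g) ≃ₗ[R] (C ⧸ N) := g.quotKerEquivOfSurjective hgsurj
    set pi : (R ⧸ LinearMap.ker g) →ₗ[R] (R ⧸ IsLocalRing.maximalIdeal R) :=
      Submodule.mapQ _ _ LinearMap.id hJ with hpi
    have hpisurj : Function.Surjective pi := by
      intro z
      obtain ⟨r, rfl⟩ := Submodule.Quotient.mk_surjective _ z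
      exact ⟨Submodule.Quotient.mk r, by rw [hpi, Submodule.mapQ_apply, LinearMap.id_apply]⟩
    exact ⟨(pi.comp e1.symm.toLinearMap).comp N.mkQ,
      (hpisurj.comp e1.symm.surjective).comp (Submodule.mkQ_surjective N)⟩
  haveI : Nontrivial (R ⧸ IsLocalRing.maximalIdeal R) :=
    Submodule.Quotient.nontrivial_iff.mpr (IsLocalRing.maximalIdeal.isMaximal R).ne_top
  -- Claim 2 : Hom(C,E) nontrivial
  have claim2 : Nontrivial (C →ₗ[R] E) := by
    obtain ⟨t, ht⟩ := exists_ne (0 : R ⧸ IsLocalRing.maximalIdeal R)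
    obtain ⟨v, hv⟩ := hlam t
    refine nontrivial_of_ne (f.comp lam) 0 (fun h0 => ht ?_)
    have : f (lam v) = 0 := by rw [← LinearMap.comp_apply, h0]; rfl
    rw [hv] at this
    exact hfinj (by rwa [map_zero f] )
  refine ⟨?_, claim2⟩
  -- find y ∈ m regular on C
  obtain ⟨y, hym, hyreg⟩ : ∃ y ∈ IsLocalRing.maximalIdeal R, ∀ c : C, y • c = 0 → c = 0 := by
    by_contra hcon
    push_neg at hcon
    have h' : ∀ y ∈ IsLocalRing.maximalIdeal R, ∃ c : C, c ≠ 0 ∧ y • c = 0 := by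
      intro y hy
      obtain ⟨c, hc1, hc2⟩ := hcon y hy
      exact ⟨c, hc2, hc1⟩
    obtain ⟨-, c, hcann⟩ := isAssociatedPrime_iff.mp (aux_max_isAssociated C h')
    have hc0 : c ≠ 0 := by
      rintro rfl
      rw [Submodule.colon_singleton_zero] at hcann
      exact (IsLocalRing.maximalIdeal.isMaximal R).ne_top hcann
    have hkill : ∀ z ∈ IsLocalRing.maximalIdeal R, z • c = 0 := by
      intro z hz
      rw [hcann, Submodule.mem_colon_singleton, Submodule.mem_bot] at hz
      exact hz
    -- build nonzero φ : C → C with x * φ = 0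
    set mu : (R ⧸ IsLocalRing.maximalIdeal R) →ₗ[R] C :=
      Submodule.liftQ _ (LinearMap.toSpanSingleton R C c)
        (fun z hz => by
          rw [LinearMap.mem_ker, LinearMap.toSpanSingleton_apply]
          exact hkill z hz) with hmu
    set phi : C →ₗ[R] C := mu.comp lam with hphi
    obtain ⟨v, hv⟩ := hlam (Submodule.Quotient.mk 1)
    have hphiv : phi v = c := by
      rw [hphi, LinearMap.comp_apply, hv, hmu, Submodule.liftQ_apply,
        LinearMap.toSpanSingleton_apply, one_smul]
    obtain ⟨r, hr⟩ := hbij.2 phi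
    have hxr : x * r = 0 := by
      apply hbij.1
      rw [map_zero]
      ext c'
      show (x * r) • c' = (0 : Module.End R C) c'
      have hphic : phi c' ∈ Submodule.span R {c} := by
        rw [hphi, LinearMap.comp_apply, hmu]
        obtain ⟨z, hz⟩ := Submodule.Quotient.mk_surjective _ (lam c')
        rw [← hz, Submodule.liftQ_apply, LinearMap.toSpanSingleton_apply]
        exact Submodule.smul_mem _ z (Submodule.mem_span_singleton_self c)
      obtain ⟨s, hs⟩ := Submodule.mem_span_singleton.mp hphic
      have hrc' : r • c' = phi c' := by
        rw [← hr]; rfl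
      rw [mul_smul, hrc', ← hs, smul_comm, hkill x hxm, smul_zero]
      rfl
    have : r = 0 := by
      have := hxr
      rw [mul_comm] at this
      exact mem_nonZeroDivisors_iff_right.mp hxreg r this
    rw [this, map_zero] at hr
    have : phi v = 0 := by rw [← hr]; rfl
    rw [hphiv] at this
    exact hc0 this
  -- torsion: every element of Hom(C,E) is killed by a power of y
  have tor : ∀ a : C →ₗ[R] E, ∃ n : ℕ, y ^ n • a = 0 := by
    intro a
    obtain ⟨s, hs⟩ := Module.Finite.fg_top (R := R) (M := C)
    have hchoice : ∀ c : C, ∃ n : ℕ, y ^ n • a c = 0 := fun c => aux_torsion f hess hym (a c)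
    choose nn hnn using hchoice
    refine ⟨s.sup nn, ?_⟩
    apply LinearMap.ext_on hs
    intro c hc
    have hle : nn c ≤ s.sup nn := Finset.le_sup hc
    rw [LinearMap.smul_apply, LinearMap.zero_apply]
    obtain ⟨k, hk⟩ := Nat.exists_eq_add_of_le hle
    rw [hk, add_comm, pow_add, mul_smul, hnn c, smul_zero]
  -- divisibility : every element of Hom(C,E) is divisible by y
  have div : ∀ b : C →ₗ[R] E, ∃ b' : C →ₗ[R] E, b = y • b' := by
    intro b
    have hyinj : Function.Injective (LinearMap.lsmul R C y) := by
      intro c c' hcc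
      have : y • (c - c') = 0 := by
        rw [smul_sub, sub_eq_zero]
        exact hcc
      have := hyreg _ this
      exact sub_eq_zero.mp this
    obtain ⟨b', hb'⟩ := hEinj.out (LinearMap.lsmul R C y) hyinj b
    refine ⟨b', ?_⟩
    ext c
    rw [LinearMap.smul_apply, ← map_smul, ← LinearMap.lsmul_apply (R := R), hb' c]
  have divpow : ∀ (n : ℕ) (b : C →ₗ[R] E), ∃ b' : C →ₗ[R] E, b = y ^ n • b' := by
    intro n
    induction n with
    | zero => intro b; exact ⟨b, by rw [pow_zero, one_smul]⟩
    | succ n ih =>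
      intro b
      obtain ⟨b1, hb1⟩ := div b
      obtain ⟨b2, hb2⟩ := ih b1
      exact ⟨b2, by rw [hb1, hb2, smul_smul, ← pow_succ']⟩
  -- tensor product vanishes
  refine subsingleton_of_forall_eq 0 (fun z => ?_)
  induction z with
  | zero => rfl
  | tmul a b =>
    obtain ⟨n, hn⟩ := tor a
    obtain ⟨b', rfl⟩ := divpow n b
    rw [← TensorProduct.smul_tmul, hn, TensorProduct.zero_tmul]
  | add u v hu hv => rw [hu, hv, add_zero]
end

section
/- Let R be a commutative Noetherian ring, C a semidualizing R-module, and E(C) the injective hull of C. Then E(C) is a C-flat R-module if and only if for every C-flat R-module M, the injective hull E(M) is a C-flat R-module. -/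
open CategoryTheory

universe u

open scoped TensorProduct

section sq
variable {R A B N F : Type u} [CommRing R] [AddCommGroup A] [Module R A] [AddCommGroup B]
  [Module R B] [AddCommGroup N] [Module R N] [AddCommGroup F] [Module R F]

lemma sq_lemma (u : A →ₗ[R] B) :
    (LinearMap.lcomp R (N ⊗[R] F) u) ∘ₗ TensorProduct.rTensorHomToHomRTensor (RingHom.id R) B N F =
      TensorProduct.rTensorHomToHomRTensor (RingHom.id R) A N F ∘ₗ (LinearMap.lcomp R N u).rTensor F := by
  apply TensorProduct.ext'
  intro g x
  ext a
  simp [TensorProduct.rTensorHomToHomRTensor_apply]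
end sq

section lemA
variable {R C N F : Type u} [CommRing R] [AddCommGroup C] [Module R C]
  [AddCommGroup N] [Module R N] [AddCommGroup F] [Module R F]
  [Module.FinitePresentation R C] [Module.Flat R F]

lemma homRTensor_bijective :
    Function.Bijective (TensorProduct.rTensorHomToHomRTensor (RingHom.id R) C N F) := by
  classical
  obtain ⟨n, p, hp⟩ := Module.Finite.exists_fin' R C
  haveI : Module.Finite R (LinearMap.ker p) :=
    Module.Finite.iff_fg.mpr (Module.FinitePresentation.fg_ker p hp)
  obtain ⟨m, g', hg'⟩ := Module.Finite.exists_fin' R (LinearMap.ker p)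
  set g : (Fin m → R) →ₗ[R] (Fin n → R) := (LinearMap.ker p).subtype ∘ₗ g' with hg
  have hrange : LinearMap.range g = LinearMap.ker p := by
    rw [hg, LinearMap.range_comp, LinearMap.range_eq_top.mpr hg',
      Submodule.map_top, Submodule.range_subtype]
  have hpg : ∀ y, p (g y) = 0 := by
    intro y
    have : g y ∈ LinearMap.ker p := hrange ▸ LinearMap.mem_range_self g y
    simpa using this
  set α := TensorProduct.rTensorHomToHomRTensor (RingHom.id R) C N F with hα
  have hβ : Function.Bijective (TensorProduct.rTensorHomToHomRTensor (RingHom.id R) (Fin n → R) N F) := by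
    rw [← rTensorHomEquivHomRTensor_toLinearMap]
    exact (rTensorHomEquivHomRTensor R (Fin n → R) N F).bijective
  have hγ : Function.Bijective (TensorProduct.rTensorHomToHomRTensor (RingHom.id R) (Fin m → R) N F) := by
    rw [← rTensorHomEquivHomRTensor_toLinearMap]
    exact (rTensorHomEquivHomRTensor R (Fin m → R) N F).bijective
  have hpinj : Function.Injective (LinearMap.lcomp R N p) := by
    intro a b hab
    refine LinearMap.ext fun c => ?_
    obtain ⟨x, rfl⟩ := hp c
    exact LinearMap.congr_fun hab x
  have hsq1 := sq_lemma (R := R) (N := N) (F := F) p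
  have hsq2 := sq_lemma (R := R) (N := N) (F := F) g
  constructor
  · have h1 : Function.Injective ((LinearMap.lcomp R N p).rTensor F) :=
      Module.Flat.rTensor_preserves_injective_linearMap _ hpinj
    have h2 : Function.Injective ((LinearMap.lcomp R (N ⊗[R] F) p) ∘ₗ α) := by
      rw [hα, hsq1]
      exact ((hβ.injective.comp h1 :) :)
    exact fun a b hab => h2 (by simp only [LinearMap.coe_comp, Function.comp_apply, hab])
  · intro h
    obtain ⟨t, ht⟩ := hβ.surjective (h ∘ₗ p)
    have hhomexact : Function.Exact (LinearMap.lcomp R N p) (LinearMap.lcomp R N g) := by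
      intro q
      constructor
      · intro hq
        have hker : LinearMap.ker p ≤ LinearMap.ker q := by
          rw [← hrange]
          rintro x ⟨y, rfl⟩
          exact LinearMap.congr_fun hq y
        set e := LinearMap.quotKerEquivOfSurjective p hp with he
        refine ⟨(Submodule.liftQ (LinearMap.ker p) q hker) ∘ₗ e.symm.toLinearMap,
          LinearMap.ext fun x => ?_⟩
        have hex : e (Submodule.Quotient.mk x) = p x := rfl
        simp only [LinearMap.lcomp_apply, LinearMap.coe_comp, Function.comp_apply,
          LinearEquiv.coe_coe, ← hex, LinearEquiv.symm_apply_apply, Submodule.liftQ_apply]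
      · rintro ⟨q', rfl⟩
        refine LinearMap.ext fun y => ?_
        simp only [LinearMap.lcomp_apply, LinearMap.coe_comp, Function.comp_apply,
          LinearMap.zero_apply, hpg y, map_zero]
    have htexact := Module.Flat.rTensor_exact F hhomexact
    have hu : ((LinearMap.lcomp R N g).rTensor F) t = 0 := by
      apply hγ.injective
      have h3 := LinearMap.congr_fun hsq2 t
      simp only [LinearMap.coe_comp, Function.comp_apply] at h3
      rw [map_zero, ← h3, ht]
      refine LinearMap.ext fun y => ?_
      simp only [LinearMap.lcomp_apply, LinearMap.coe_comp, Function.comp_apply,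
        LinearMap.zero_apply, hpg y, map_zero]
    obtain ⟨s, hs⟩ := (htexact t).mp hu
    refine ⟨s, ?_⟩
    have hcomp : (LinearMap.lcomp R (N ⊗[R] F) p) (α s) = h ∘ₗ p := by
      have h4 := LinearMap.congr_fun hsq1 s
      simp only [LinearMap.coe_comp, Function.comp_apply] at h4
      rw [hα, h4, hs, ht]
    refine LinearMap.ext fun c => ?_
    obtain ⟨x, rfl⟩ := hp c
    exact LinearMap.congr_fun hcomp x
end lemA

section lemB
variable {R I F : Type u} [CommRing R] [IsNoetherianRing R] [AddCommGroup I] [Module R I]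
  [AddCommGroup F] [Module R F] [Module.Flat R F]

lemma injective_tmul_flat (hI : Module.Injective R I) :
    Module.Injective R (I ⊗[R] F) := by
  apply Module.Baer.injective
  intro a g
  haveI : Module.Finite R a := Module.Finite.iff_fg.mpr (IsNoetherian.noetherian a)
  haveI : Module.FinitePresentation R a := Module.finitePresentation_of_finite R a
  obtain ⟨t, ht⟩ := (homRTensor_bijective (R := R) (C := a) (N := I) (F := F)).surjective g
  subst ht
  induction t with
  | zero => exact ⟨0, fun x mx => by simp⟩
  | tmul q y =>
      obtain ⟨q', hq'⟩ := hI.out a.subtype Subtype.val_injective q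
      refine ⟨((TensorProduct.mk R I F).flip y) ∘ₗ q', fun x mx => ?_⟩
      simp only [LinearMap.coe_comp, Function.comp_apply, LinearMap.flip_apply,
        TensorProduct.mk_apply, TensorProduct.rTensorHomToHomRTensor_apply]
      exact congrArg (fun z => z ⊗ₜ[R] y) (hq' ⟨x, mx⟩)
  | add u v hu hv =>
      obtain ⟨gu, hgu⟩ := hu
      obtain ⟨gv, hgv⟩ := hv
      refine ⟨gu + gv, fun x mx => ?_⟩
      simp [hgu x mx, hgv x mx]
end lemB

section retract
variable {R C G E' : Type u} [CommRing R] [AddCommGroup C] [Module R C]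
  [AddCommGroup G] [Module R G] [AddCommGroup E'] [Module R E']
  [Module.FinitePresentation R C] [Module.Flat R G]

lemma isCFlat_of_retract (hls : Function.Bijective (LinearMap.lsmul R C))
    (h : E' →ₗ[R] C ⊗[R] G) (π : C ⊗[R] G →ₗ[R] E') (hπ : π ∘ₗ h = LinearMap.id) :
    IsCFlat R C E' := by
  classical
  have hπh : ∀ x, π (h x) = x := fun x => LinearMap.congr_fun hπ x
  set els : R ≃ₗ[R] (C →ₗ[R] C) := LinearEquiv.ofBijective (LinearMap.lsmul R C) hls with hels
  set eα : (C →ₗ[R] C) ⊗[R] G ≃ₗ[R] (C →ₗ[R] C ⊗[R] G) :=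
    LinearEquiv.ofBijective (TensorProduct.rTensorHomToHomRTensor (RingHom.id R) C C G)
      homRTensor_bijective with heα
  set ν : G ≃ₗ[R] (C →ₗ[R] C ⊗[R] G) :=
    (TensorProduct.lid R G).symm ≪≫ₗ (TensorProduct.congr els (LinearEquiv.refl R G)) ≪≫ₗ eα
    with hν
  have hνapp : ∀ (g : G) (c : C), ν g c = c ⊗ₜ[R] g := by
    intro g c
    simp only [hν, LinearEquiv.trans_apply, TensorProduct.lid_symm_apply,
      TensorProduct.congr_tmul, LinearEquiv.refl_apply, heα, LinearEquiv.ofBijective_apply,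
      TensorProduct.rTensorHomToHomRTensor_apply, hels, LinearMap.lsmul_apply, one_smul]
  set e : C ⊗[R] G →ₗ[R] C ⊗[R] G := h ∘ₗ π with he
  have heapp : ∀ z, e (e z) = e z := by
    intro z
    simp only [he, LinearMap.coe_comp, Function.comp_apply, hπh (π z)]
  set ψ : G →ₗ[R] G :=
    ν.symm.toLinearMap ∘ₗ (LinearMap.llcomp R C (C ⊗[R] G) (C ⊗[R] G) e) ∘ₗ ν.toLinearMap
    with hψ
  have key1 : ∀ g : G, ν (ψ g) = e ∘ₗ ν g := by
    intro g
    simp only [hψ, LinearMap.coe_comp, Function.comp_apply, LinearEquiv.coe_coe,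
      LinearEquiv.apply_symm_apply, LinearMap.llcomp_apply]
    rfl
  have key2 : ∀ (c : C) (g : G), e (c ⊗ₜ[R] g) = c ⊗ₜ[R] ψ g := by
    intro c g
    rw [← hνapp (ψ g) c, key1 g]
    simp only [LinearMap.coe_comp, Function.comp_apply, hνapp]
  have hψψ : ∀ g, ψ (ψ g) = ψ g := by
    intro g
    apply ν.injective
    rw [key1, key1]
    refine LinearMap.ext fun c => ?_
    simp only [LinearMap.coe_comp, Function.comp_apply, heapp]
  set F' : Submodule R G := LinearMap.range ψ with hF'
  set r : G →ₗ[R] F' := LinearMap.codRestrict F' ψ (fun x => LinearMap.mem_range_self ψ x)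
    with hr
  have hry : ∀ y : F', r (y : G) = y := by
    rintro ⟨y, z, rfl⟩
    exact Subtype.ext (hψψ z)
  have hri : r ∘ₗ F'.subtype = LinearMap.id := LinearMap.ext fun y => hry y
  haveI : Module.Flat R F' := Module.Flat.of_retract F'.subtype r hri
  have hir : F'.subtype ∘ₗ r = ψ := LinearMap.subtype_comp_codRestrict ψ F' _
  have he2 : e = LinearMap.lTensor C ψ := by
    apply TensorProduct.ext'
    intro c g
    rw [LinearMap.lTensor_tmul]
    exact key2 c g
  set θ : C ⊗[R] F' →ₗ[R] E' := π ∘ₗ LinearMap.lTensor C F'.subtype with hθ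
  set θ' : E' →ₗ[R] C ⊗[R] F' := LinearMap.lTensor C r ∘ₗ h with hθ'
  have hlt : LinearMap.lTensor C F'.subtype ∘ₗ LinearMap.lTensor C r = e := by
    rw [← LinearMap.lTensor_comp, hir]
    exact he2.symm
  have h1 : θ ∘ₗ θ' = LinearMap.id := by
    refine LinearMap.ext fun x => ?_
    have h5 := LinearMap.congr_fun hlt (h x)
    simp only [LinearMap.coe_comp, Function.comp_apply] at h5
    simp only [hθ, hθ', LinearMap.coe_comp, Function.comp_apply, LinearMap.id_coe, id_eq]
    rw [h5]
    simp only [he, LinearMap.coe_comp, Function.comp_apply, hπh]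
  have h2 : θ' ∘ₗ θ = LinearMap.id := by
    apply TensorProduct.ext'
    intro c y
    simp only [hθ, hθ', LinearMap.coe_comp, Function.comp_apply, LinearMap.lTensor_tmul,
      LinearMap.id_coe, id_eq]
    have hsv : F'.subtype y = (y : G) := rfl
    have h7 : ψ (y : G) = (y : G) := by
      obtain ⟨z, hz⟩ := y.2
      rw [← hz, hψψ]
    rw [hsv, show h (π (c ⊗ₜ[R] (y : G))) = e (c ⊗ₜ[R] (y : G)) from rfl, key2,
      LinearMap.lTensor_tmul, h7, hry]
  exact ⟨F', inferInstance, inferInstance, inferInstance,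
    ⟨LinearEquiv.ofLinear θ θ' h1 h2⟩⟩
end retract


/-- `E(C)` is `C`-flat iff the injective hull of every `C`-flat module is `C`-flat. -/
theorem injectiveHull_isCFlat_iff_injectiveHull_of_isCFlat (R : Type u) [CommRing R]
    [IsNoetherianRing R]
    (C : Type u) [AddCommGroup C] [Module R C] (hC : IsSemidualizing R C)
    (E : Type u) [AddCommGroup E] [Module R E] (f : C →ₗ[R] E) (hE : IsInjectiveHull R f) :
    IsCFlat R C E ↔
      ∀ (M : Type u) [AddCommGroup M] [Module R M], IsCFlat R C M →
        ∀ (E' : Type u) [AddCommGroup E'] [Module R E'] (f' : M →ₗ[R] E'),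
          IsInjectiveHull R f' → IsCFlat R C E' := by
  constructor
  · rintro ⟨F₀, iF₀a, iF₀m, hF₀, ⟨eE⟩⟩
    intro M _ _ hM E' _ _ f' hE'
    obtain ⟨F, iFa, iFm, hF, ⟨eM⟩⟩ := hM
    obtain ⟨hE'inj, hf'inj, hess⟩ := hE'
    obtain ⟨hEinj, hfinj, -⟩ := hE
    haveI : Module.Flat R F₀ := hF₀
    haveI : Module.Flat R F := hF
    haveI : Module.Finite R C := hC.1
    haveI : Module.FinitePresentation R C := Module.finitePresentation_of_finite R C
    have hIinj : Module.Injective R (E ⊗[R] F) := injective_tmul_flat hEinj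
    set g : M →ₗ[R] E ⊗[R] F := (f.rTensor F) ∘ₗ eM.symm.toLinearMap with hg
    have hginj : Function.Injective g :=
      (Module.Flat.rTensor_preserves_injective_linearMap f hfinj).comp eM.symm.injective
    obtain ⟨H, hH⟩ := hIinj.out f' hf'inj g
    have hker : LinearMap.ker H ⊓ LinearMap.range f' = ⊥ := by
      rw [eq_bot_iff]
      rintro x hx
      obtain ⟨hx1, hx2⟩ := Submodule.mem_inf.mp hx
      obtain ⟨m, rfl⟩ := hx2
      have hgm : g m = 0 := by rw [← hH m]; exact hx1
      have hm : m = 0 := hginj (by simpa using hgm)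
      simp [hm]
    have hHker : LinearMap.ker H = ⊥ := by
      by_contra hne
      exact hess _ hne hker
    have hHinj : Function.Injective H := LinearMap.ker_eq_bot.mp hHker
    obtain ⟨π, hπ⟩ := hE'inj.out H hHinj LinearMap.id
    set eI : E ⊗[R] F ≃ₗ[R] C ⊗[R] (F₀ ⊗[R] F) :=
      (TensorProduct.congr eE.symm (LinearEquiv.refl R F)).trans (TensorProduct.assoc R C F₀ F)
      with heI
    refine isCFlat_of_retract hC.2.1 (eI.toLinearMap ∘ₗ H) (π ∘ₗ eI.symm.toLinearMap) ?_
    refine LinearMap.ext fun x => ?_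
    simp only [LinearMap.coe_comp, Function.comp_apply, LinearEquiv.coe_coe,
      LinearEquiv.symm_apply_apply, LinearMap.id_apply]
    exact hπ x
  · intro hAll
    exact hAll C ⟨R, inferInstance, inferInstance, inferInstance, ⟨TensorProduct.rid R C⟩⟩
      E f hE
end
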